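/- arXiv:2009.05382 — 8 statements merged into one kernel-verified Lean document; each statement's English description precedes it below -/
import Mathlib

section
/- Let (V,E) be an undirected graph, s,t ∈ V, M ⊆ E a set of vulnerable edges, and k ≥ 0 an integer. If X ⊆ E is feasible for undirected FTP (i.e., for every F ⊆ M with |F| ≤ k the graph (V, X∖F) contains an s-t path), then there exists an orientation X⃗ of X, assigning to each edge of X exactly one of its two possible directions, such that for every F ⊆ M with |F| ≤ k the directed graph (V, X⃗ minus the oriented arcs coming from edges of F) contains a directed s-t path. -/
set_option linter.unusedVariables false
set_option linter.unusedSectionVars false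

open Finset


/-- `uReach S a b`: the undirected graph with edge set `S` contains an `a`-`b` path. -/
def uReach {V : Type*} [DecidableEq V] (S : Finset (Sym2 V)) (a b : V) : Prop :=
  Relation.ReflTransGen (fun x y => Sym2.mk x y ∈ S) a b

/-- Feasibility for undirected Fault-Tolerant Path: for every `F ⊆ M` with `|F| ≤ k`,
the graph `(V, X \ F)` contains an `s`-`t` path. -/
def ftpuFeasible {V : Type*} [DecidableEq V] (X M : Finset (Sym2 V)) (s t : V) (k : ℕ) : Prop :=
  ∀ F ⊆ M, F.card ≤ k → uReach (X \ F) s t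


namespace FTPProof2

variable {V : Type*} [DecidableEq V]

lemma exists_dup_split : ∀ (l : List V), ¬ l.Nodup → ∃ (p : List V) (x : V) (q r : List V), l = p ++ x :: q ++ x :: r := by
  intro l
  induction l with
  | nil => intro h; exact absurd List.nodup_nil h
  | cons a l ih =>
    intro h
    by_cases ha : a ∈ l
    · obtain ⟨q, r, rfl⟩ := List.append_of_mem ha
      exact ⟨[], a, q, r, rfl⟩
    · have hn : ¬ l.Nodup := fun hn => h (List.nodup_cons.2 ⟨ha, hn⟩)
      obtain ⟨p, x, q, r, rfl⟩ := ih hn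
      exact ⟨a :: p, x, q, r, rfl⟩

lemma chain'_shorten {R : V → V → Prop} {p q r : List V} {x : V}
    (h : List.Chain' R (p ++ x :: q ++ x :: r)) : List.Chain' R (p ++ x :: r) := by
  have h' : List.Chain' R ((p ++ x :: q) ++ x :: r) := by
    simpa [List.append_assoc] using h
  unfold List.Chain' at h'; rw [List.isChain_split] at h'
  obtain ⟨h1, h2⟩ := h'
  have h1' : List.Chain' R (p ++ x :: (q ++ [x])) := by simpa [List.append_assoc, List.Chain'] using h1
  unfold List.Chain' at h1'; rw [List.isChain_split] at h1'
  exact List.isChain_split.2 ⟨h1'.1, h2⟩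

lemma nodup_of_chain'_aux {R : V → V → Prop} : ∀ (n : ℕ) (l : List V), l.length ≤ n → l.Chain' R →
    ∃ m : List V, m.Chain' R ∧ m.Nodup ∧ m.head? = l.head? ∧ m.getLast? = l.getLast? := by
  intro n
  induction n with
  | zero =>
    intro l hl _
    have : l = [] := List.length_eq_zero_iff.1 (Nat.le_zero.1 hl)
    exact ⟨l, by rw [this]; exact List.isChain_nil, by simp [this], rfl, rfl⟩
  | succ n ih =>
  intro l hl hc
  by_cases hn : l.Nodup
  · exact ⟨l, hc, hn, rfl, rfl⟩
  · obtain ⟨p, x, q, r, rfl⟩ := exists_dup_split _ hn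
    have hlen : (p ++ x :: r).length ≤ n := by
      simp only [List.length_append, List.length_cons] at hl ⊢; omega
    obtain ⟨m, h1, h2, h3, h4⟩ := ih (p ++ x :: r) hlen (chain'_shorten hc)
    refine ⟨m, h1, h2, ?_, ?_⟩
    · rw [h3]
      cases p <;> simp
    · rw [h4]
      obtain ⟨y, hy⟩ : ∃ y, (x :: r).getLast? = some y := by
        cases r with
        | nil => exact ⟨x, rfl⟩
        | cons z r' => exact ⟨_, List.getLast?_eq_getLast (List.cons_ne_nil _ _)⟩
      rw [show p ++ x :: q ++ x :: r = (p ++ x :: q) ++ (x :: r) by simp [List.append_assoc]]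
      rw [show p ++ x :: r = p ++ (x :: r) from rfl]
      rw [List.getLast?_append, List.getLast?_append, hy]
      simp

lemma exists_nodup_chain' {R : V → V → Prop} {a b : V} (h : Relation.ReflTransGen R a b) :
    ∃ l : List V, (a :: l).Chain' R ∧ (a :: l).Nodup ∧ (a :: l).getLast? = some b := by
  obtain ⟨l, hc, hlast⟩ := List.exists_isChain_cons_of_relationReflTransGen h
  have hc' : (a :: l).Chain' R := hc
  obtain ⟨m, h1, h2, h3, h4⟩ := nodup_of_chain'_aux (a :: l).length (a :: l) le_rfl hc'
  cases m with
  | nil => simp at h3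
  | cons a' m' =>
    have ha : a' = a := by simpa using h3
    subst ha
    refine ⟨m', h1, h2, ?_⟩
    rw [h4, List.getLast?_eq_getLast (List.cons_ne_nil _ _), hlast]

lemma chain'_congr_mem {R S : V → V → Prop} : ∀ (l : List V), List.Chain' R l →
    (∀ x ∈ l, ∀ y ∈ l, R x y → S x y) → List.Chain' S l := by
  intro l
  induction l with
  | nil => intro _ _; exact List.isChain_nil
  | cons x l ih =>
    intro h hmem
    unfold List.Chain' at h ⊢; rw [List.isChain_cons] at h ⊢
    refine ⟨fun y hy => hmem x (by simp) y ?_ (h.1 y hy), ih h.2 fun u hu v hv => hmem u (by simp [hu]) v (by simp [hv])⟩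
    cases l with
    | nil => simp at hy
    | cons z l' => simp at hy; simp [hy]


/-- relevant vertices -/
noncomputable def vset (X : Finset (Sym2 V)) (s t : V) : Finset V :=
  insert s (insert t (X.biUnion fun e => {e.out.1, e.out.2}))

/-- capacities -/
def cap (X M : Finset (Sym2 V)) (k : ℕ) (u v : V) : ℕ :=
  if s(u, v) ∈ X then (if s(u, v) ∈ M then 1 else k + 1) else 0

/-- divergence of a flow at a vertex -/
noncomputable def dvg (X : Finset (Sym2 V)) (s t : V) (f : V → V → ℕ) (u : V) : ℤ :=
  (∑ v ∈ vset X s t, (f u v : ℤ)) - ∑ v ∈ vset X s t, (f v u : ℤ)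

variable {X M : Finset (Sym2 V)} {s t : V} {k : ℕ}

lemma s_mem_vset : s ∈ vset X s t := mem_insert_self _ _
lemma t_mem_vset : t ∈ vset X s t := mem_insert_of_mem (mem_insert_self _ _)

lemma edge_mem_vset {u v : V} (h : s(u, v) ∈ X) : u ∈ vset X s t ∧ v ∈ vset X s t := by
  have hout : Sym2.mk (s(u,v)).out.1 (s(u,v)).out.2 = s(u, v) := Quot.out_eq _
  rw [Sym2.mk_eq_mk_iff (p := (s(u,v)).out) (q := (u, v))] at hout
  have hm : ∀ w, (w = (s(u,v)).out.1 ∨ w = (s(u,v)).out.2) → w ∈ vset X s t := by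
    intro w hw
    apply mem_insert_of_mem; apply mem_insert_of_mem
    rw [mem_biUnion]
    exact ⟨s(u, v), h, by rcases hw with rfl | rfl <;> simp⟩
  rcases hout with h' | h'
  · exact ⟨hm u (Or.inl (by rw [h'])), hm v (Or.inr (by rw [h']))⟩
  · exact ⟨hm u (Or.inr (by rw [h']; rfl)), hm v (Or.inl (by rw [h']; rfl))⟩

lemma cap_symm (u v : V) : cap X M k u v = cap X M k v u := by
  unfold cap; rw [Sym2.eq_swap]

lemma mem_vset_of_cap_pos {u v : V} (h : 0 < cap X M k u v) :
    s(u, v) ∈ X ∧ u ∈ vset X s t ∧ v ∈ vset X s t := by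
  by_cases h1 : s(u,v) ∈ X
  · exact ⟨h1, edge_mem_vset h1⟩
  · rw [cap, if_neg h1] at h; exact absurd h (by simp)

lemma flow_cut (f : V → V → ℕ) (r : ℤ)
    (hcons : ∀ u ∈ vset X s t, u ≠ s → u ≠ t → dvg X s t f u = 0)
    (hval : dvg X s t f s = r)
    (P : V → Prop) [DecidablePred P] (hPs : P s) (hPt : ¬ P t) :
    (∑ u ∈ (vset X s t).filter P, ∑ v ∈ (vset X s t).filter (fun v => ¬ P v),
      ((f u v : ℤ) - (f v u : ℤ))) = r := by
  set T := vset X s t with hT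
  set A := T.filter P with hA
  set B := T.filter (fun v => ¬ P v) with hB
  have hsA : s ∈ A := by rw [hA, mem_filter]; exact ⟨s_mem_vset, hPs⟩
  have h1 : ∑ u ∈ A, dvg X s t f u = r := by
    rw [Finset.sum_eq_single_of_mem s hsA]
    · exact hval
    · intro u hu hus
      rw [hA, mem_filter] at hu
      exact hcons u hu.1 hus (fun h => hPt (h ▸ hu.2))
  have expand : ∀ u, dvg X s t f u =
      ((∑ v ∈ A, (f u v : ℤ)) + (∑ v ∈ B, (f u v : ℤ)))
        - ((∑ v ∈ A, (f v u : ℤ)) + (∑ v ∈ B, (f v u : ℤ))) := by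
    intro u
    rw [dvg, ← Finset.sum_filter_add_sum_filter_not T P (fun v => (f u v : ℤ)),
      ← Finset.sum_filter_add_sum_filter_not T P (fun v => (f v u : ℤ))]
  rw [Finset.sum_congr rfl (fun u _ => expand u)] at h1
  rw [Finset.sum_sub_distrib, Finset.sum_add_distrib, Finset.sum_add_distrib] at h1
  have hcomm : ∑ u ∈ A, ∑ v ∈ A, (f u v : ℤ) = ∑ u ∈ A, ∑ v ∈ A, (f v u : ℤ) :=
    Finset.sum_comm
  rw [Finset.sum_congr rfl (fun u (_ : u ∈ A) => Finset.sum_sub_distrib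
    (f := fun v => (f u v : ℤ)) (g := fun v => (f v u : ℤ))), Finset.sum_sub_distrib]
  omega

lemma reach_cross {S : Finset (Sym2 V)} {a b : V}
    (h : Relation.ReflTransGen (fun x y => s(x,y) ∈ S) a b)
    (P : V → Prop) (ha : P a) (hb : ¬ P b) :
    ∃ x y, P x ∧ ¬ P y ∧ s(x, y) ∈ S := by
  induction h with
  | refl => exact absurd ha hb
  | @tail c d hcd hstep ih =>
    by_cases hc : P c
    · exact ⟨c, d, hc, hb, hstep⟩
    · exact ih hc

lemma cutcap_ge (hfeas : ftpuFeasible X M s t k)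
    (P : V → Prop) [DecidablePred P] (hPs : P s) (hPt : ¬ P t)
    (hle : (∑ u ∈ (vset X s t).filter P, ∑ v ∈ (vset X s t).filter (fun v => ¬ P v),
      cap X M k u v) ≤ k) : False := by
  classical
  set T := vset X s t with hT
  set A := T.filter P with hA
  set B := T.filter (fun v => ¬ P v) with hB
  -- single term lower bound for the capacity sum
  have hsingle : ∀ u ∈ A, ∀ v ∈ B, cap X M k u v ≤ ∑ u ∈ A, ∑ v ∈ B, cap X M k u v := by
    intro u hu v hv
    calc cap X M k u v ≤ ∑ v ∈ B, cap X M k u v :=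
          Finset.single_le_sum (fun i _ => Nat.zero_le _) hv
      _ ≤ ∑ u ∈ A, ∑ v ∈ B, cap X M k u v :=
          Finset.single_le_sum (f := fun u => ∑ v ∈ B, cap X M k u v)
            (fun i _ => Nat.zero_le _) hu
  -- crossing edges
  set Fc := X.filter (fun e => (P e.out.1 ∧ ¬ P e.out.2) ∨ (P e.out.2 ∧ ¬ P e.out.1)) with hFc
  -- each crossing edge has a crossing representation
  have hrep : ∀ e ∈ Fc, ∃ u v, s(u, v) = e ∧ P u ∧ ¬ P v := by
    intro e he
    rw [hFc, mem_filter] at he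
    rcases he.2 with h' | h'
    · exact ⟨e.out.1, e.out.2, Quot.out_eq e, h'.1, h'.2⟩
    · exact ⟨e.out.2, e.out.1, by rw [Sym2.eq_swap]; exact Quot.out_eq e, h'.1, h'.2⟩
  have hFcX : ∀ e ∈ Fc, e ∈ X := fun e he => (mem_filter.1 he).1
  -- all crossing edges are vulnerable
  have hFcM : ∀ e ∈ Fc, e ∈ M := by
    intro e he
    by_contra heM
    obtain ⟨u, v, huv, hu, hv⟩ := hrep e he
    have heX : s(u, v) ∈ X := huv ▸ hFcX e he
    have hcap : cap X M k u v = k + 1 := by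
      rw [cap, if_pos heX, if_neg (huv ▸ heM)]
    have huA : u ∈ A := by
      rw [hA, mem_filter]; exact ⟨(edge_mem_vset heX).1, hu⟩
    have hvB : v ∈ B := by
      rw [hB, mem_filter]; exact ⟨(edge_mem_vset heX).2, hv⟩
    have := hsingle u huA v hvB
    omega
  -- the crossing edge count is at most k
  set Acr := (A ×ˢ B).filter (fun p => 0 < cap X M k p.1 p.2) with hAcr
  have hcard1 : Fc.card ≤ Acr.card := by
    apply Finset.card_le_card_of_injOn (fun e => if P e.out.1 then e.out else e.out.swap)
    · intro e he
      rw [hFc, Finset.mem_coe, mem_filter] at he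
      have heX := he.1
      have hoX : s(e.out.1, e.out.2) ∈ X := by
        have h5 : Sym2.mk e.out.1 e.out.2 = e := Quot.out_eq e
        show Sym2.mk e.out.1 e.out.2 ∈ X
        rw [h5]; exact heX
      have hoX' : s(e.out.2, e.out.1) ∈ X := by rwa [Sym2.eq_swap]
      rcases he.2 with h' | h'
      · beta_reduce; rw [if_pos h'.1, hAcr, Finset.mem_coe, mem_filter]
        refine ⟨mem_product.2 ⟨?_, ?_⟩, ?_⟩
        · rw [hA, mem_filter]; exact ⟨(edge_mem_vset hoX).1, h'.1⟩
        · rw [hB, mem_filter]; exact ⟨(edge_mem_vset hoX).2, h'.2⟩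
        · show 0 < cap X M k e.out.1 e.out.2
          rw [cap, if_pos hoX]; split_ifs <;> omega
      · have hP1 : ¬ P e.out.1 := h'.2
        beta_reduce; rw [if_neg hP1, hAcr, Finset.mem_coe, mem_filter]
        refine ⟨mem_product.2 ⟨?_, ?_⟩, ?_⟩
        · rw [hA, mem_filter]; exact ⟨(edge_mem_vset hoX').1, h'.1⟩
        · rw [hB, mem_filter]; exact ⟨(edge_mem_vset hoX').2, h'.2⟩
        · show 0 < cap X M k e.out.2 e.out.1
          rw [cap, if_pos hoX']; split_ifs <;> omega
    · intro e1 he1 e2 he2 heq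
      have h1 : Sym2.mk (if P e1.out.1 then e1.out else e1.out.swap).1 (if P e1.out.1 then e1.out else e1.out.swap).2 = e1 := by
        split_ifs
        · exact Quot.out_eq e1
        · rw [Sym2.mk_prod_swap_eq]; exact Quot.out_eq e1
      have h2 : Sym2.mk (if P e2.out.1 then e2.out else e2.out.swap).1 (if P e2.out.1 then e2.out else e2.out.swap).2 = e2 := by
        split_ifs
        · exact Quot.out_eq e2
        · rw [Sym2.mk_prod_swap_eq]; exact Quot.out_eq e2
      have heq' : (if P e1.out.1 then e1.out else e1.out.swap)
          = (if P e2.out.1 then e2.out else e2.out.swap) := heq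
      rw [← h1, ← h2, heq']
  have hcard2 : Acr.card ≤ ∑ u ∈ A, ∑ v ∈ B, cap X M k u v := by
    have h0 : Acr.card • 1 ≤ ∑ p ∈ Acr, cap X M k p.1 p.2 :=
      Finset.card_nsmul_le_sum Acr _ 1 (fun p hp => (mem_filter.1 hp).2)
    rw [smul_eq_mul, mul_one] at h0
    calc Acr.card ≤ ∑ p ∈ Acr, cap X M k p.1 p.2 := h0
      _ ≤ ∑ p ∈ A ×ˢ B, cap X M k p.1 p.2 :=
          Finset.sum_le_sum_of_subset (Finset.filter_subset _ _)
      _ = ∑ u ∈ A, ∑ v ∈ B, cap X M k u v := Finset.sum_product _ _ _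
  have hFccard : Fc.card ≤ k := le_trans hcard1 (le_trans hcard2 hle)
  -- feasibility gives a path avoiding Fc
  have hpath : uReach (X \ Fc) s t := hfeas Fc (fun e he => hFcM e he) hFccard
  rw [uReach] at hpath
  obtain ⟨x, y, hx, hy, hxy⟩ := reach_cross hpath P hPs hPt
  rw [mem_sdiff] at hxy
  apply hxy.2
  have hout : Sym2.mk (s(x,y)).out.1 (s(x,y)).out.2 = s(x, y) := Quot.out_eq _
  rw [Sym2.mk_eq_mk_iff (p := (s(x,y)).out) (q := (x, y))] at hout
  rw [hFc, mem_filter]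
  refine ⟨hxy.1, ?_⟩
  rcases hout with h' | h'
  · left; rw [h']; exact ⟨hx, hy⟩
  · right; rw [h']; exact ⟨hx, hy⟩

lemma dvg_shift (f g : V → V → ℕ) (p q : V) (c : ℤ)
    (hp : p ∈ vset X s t) (hq : q ∈ vset X s t)
    (h : ∀ x y, (g x y : ℤ) = (f x y : ℤ) + (if (x, y) = (p, q) then c else 0)) (u : V) :
    dvg X s t g u = dvg X s t f u + (if u = p then c else 0) - (if u = q then c else 0) := by
  have h1 : ∑ v ∈ vset X s t, (g u v : ℤ)
      = (∑ v ∈ vset X s t, (f u v : ℤ)) + (if u = p then c else 0) := by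
    rw [Finset.sum_congr rfl (fun v _ => h u v), Finset.sum_add_distrib]
    congr 1
    have he : ∀ v, (if ((u : V), v) = (p, q) then c else 0) = if u = p then (if v = q then c else 0) else 0 := by
      intro v
      by_cases h1 : u = p <;> by_cases h2 : v = q <;> simp [Prod.ext_iff, h1, h2]
    rw [Finset.sum_congr rfl (fun v _ => he v)]
    by_cases h1 : u = p
    · simp only [if_pos h1]
      rw [Finset.sum_ite_eq' (vset X s t) q (fun _ => c), if_pos hq]
    · simp [h1]
  have h2 : ∑ v ∈ vset X s t, (g v u : ℤ)
      = (∑ v ∈ vset X s t, (f v u : ℤ)) + (if u = q then c else 0) := by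
    rw [Finset.sum_congr rfl (fun v _ => h v u), Finset.sum_add_distrib]
    congr 1
    have he : ∀ v, (if ((v : V), u) = (p, q) then c else 0) = if u = q then (if v = p then c else 0) else 0 := by
      intro v
      by_cases h1 : u = q <;> by_cases h2 : v = p <;> simp [Prod.ext_iff, h1, h2]
    rw [Finset.sum_congr rfl (fun v _ => he v)]
    by_cases h1 : u = q
    · simp only [if_pos h1]
      rw [Finset.sum_ite_eq' (vset X s t) p (fun _ => c), if_pos hp]
    · simp [h1]
  rw [dvg, dvg, h1, h2]
  ring

lemma augment_step (f : V → V → ℕ) (hf : ∀ u v, f u v ≤ cap X M k u v) (a b : V)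
    (hres : f a b < cap X M k a b + f b a) :
    ∃ g : V → V → ℕ, (∀ u v, g u v ≤ cap X M k u v) ∧
      (∀ x y, s(x, y) ≠ s(a, b) → g x y = f x y) ∧
      (∀ u, dvg X s t g u = dvg X s t f u
        + (if u = a then 1 else 0) - (if u = b then 1 else 0)) := by
  classical
  have hab : a ∈ vset X s t ∧ b ∈ vset X s t := by
    by_cases h0 : 0 < f b a
    · have h1 := mem_vset_of_cap_pos (s := s) (t := t) (lt_of_lt_of_le h0 (hf b a))
      exact ⟨h1.2.2, h1.2.1⟩
    · have hc : 0 < cap X M k a b := by omega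
      have h1 := mem_vset_of_cap_pos (s := s) (t := t) hc
      exact ⟨h1.2.1, h1.2.2⟩
  by_cases h0 : 0 < f b a
  · refine ⟨fun x y => if (x, y) = (b, a) then f b a - 1 else f x y, ?_, ?_, ?_⟩
    · intro u v
      simp only []
      by_cases h : (u, v) = (b, a)
      · rw [Prod.mk.injEq] at h; obtain ⟨hx, hy⟩ := h
        subst hx; subst hy
        rw [if_pos rfl]
        exact le_trans (Nat.sub_le _ _) (hf _ _)
      · rw [if_neg h]; exact hf u v
    · intro x y hxy
      simp only []
      have hne : (x, y) ≠ (b, a) := by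
        intro h
        rw [Prod.mk.injEq] at h; obtain ⟨hx, hy⟩ := h
        apply hxy
        rw [hx, hy]; exact Sym2.eq_swap
      rw [if_neg hne]
    · intro u
      have hgval : ∀ x y,
          (((fun x y => if (x, y) = (b, a) then f b a - 1 else f x y) : V → V → ℕ) x y : ℤ)
            = (f x y : ℤ) + (if (x, y) = (b, a) then (-1 : ℤ) else 0) := by
        intro x y
        simp only []
        by_cases h : (x, y) = (b, a)
        · rw [Prod.mk.injEq] at h; obtain ⟨hx, hy⟩ := h
          subst hx; subst hy
          rw [if_pos rfl, if_pos rfl, Nat.cast_sub (by omega : 1 ≤ f x y)]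
          push_cast; ring
        · rw [if_neg h, if_neg h]; ring
      have hd := dvg_shift f _ b a (-1) hab.2 hab.1 hgval u
      rw [hd]
      split_ifs <;> ring
  · have hlt : f a b < cap X M k a b := by omega
    refine ⟨fun x y => if (x, y) = (a, b) then f a b + 1 else f x y, ?_, ?_, ?_⟩
    · intro u v
      simp only []
      by_cases h : (u, v) = (a, b)
      · rw [Prod.mk.injEq] at h; obtain ⟨hx, hy⟩ := h
        subst hx; subst hy
        rw [if_pos rfl]
        omega
      · rw [if_neg h]; exact hf u v
    · intro x y hxy
      simp only []
      have hne : (x, y) ≠ (a, b) := by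
        intro h
        rw [Prod.mk.injEq] at h; obtain ⟨hx, hy⟩ := h
        apply hxy
        rw [hx, hy]
      rw [if_neg hne]
    · intro u
      have hgval : ∀ x y,
          (((fun x y => if (x, y) = (a, b) then f a b + 1 else f x y) : V → V → ℕ) x y : ℤ)
            = (f x y : ℤ) + (if (x, y) = (a, b) then (1 : ℤ) else 0) := by
        intro x y
        simp only []
        by_cases h : (x, y) = (a, b)
        · rw [Prod.mk.injEq] at h; obtain ⟨hx, hy⟩ := h
          subst hx; subst hy
          rw [if_pos rfl, if_pos rfl]
          push_cast; ring
        · rw [if_neg h, if_neg h]; ring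
      have hd := dvg_shift f _ a b 1 hab.1 hab.2 hgval u
      rw [hd]

lemma augment_path (b : V) : ∀ (l : List V) (a : V) (f : V → V → ℕ),
    (∀ u v, f u v ≤ cap X M k u v) →
    List.Chain' (fun x y => f x y < cap X M k x y + f y x) (a :: l) →
    (a :: l).Nodup → (a :: l).getLast? = some b →
    ∃ g : V → V → ℕ, (∀ u v, g u v ≤ cap X M k u v) ∧
      ∀ u, dvg X s t g u = dvg X s t f u
        + (if u = a then 1 else 0) - (if u = b then 1 else 0) := by
  intro l
  induction l with
  | nil =>
    intro a f hf _ _ hlast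
    have hab : a = b := by simpa using hlast
    subst hab
    exact ⟨f, hf, fun u => by ring⟩
  | cons c l ih =>
    intro a f hf hchain hnodup hlast
    have hres : f a c < cap X M k a c + f c a := (List.isChain_cons_cons.1 hchain).1
    obtain ⟨f₁, hf₁, hsame, hdvg₁⟩ := augment_step (s := s) (t := t) f hf a c hres
    have hanotin : a ∉ c :: l := (List.nodup_cons.1 hnodup).1
    have hchain₁ : List.Chain' (fun x y => f₁ x y < cap X M k x y + f₁ y x) (c :: l) := by
      apply chain'_congr_mem (c :: l) (List.isChain_cons_cons.1 hchain).2
      intro x hx y hy hR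
      have hxa : x ≠ a := fun h => hanotin (h ▸ hx)
      have hya : y ≠ a := fun h => hanotin (h ▸ hy)
      have h1 : f₁ x y = f x y := by
        apply hsame
        intro h
        rw [Sym2.eq_iff] at h
        tauto
      have h2 : f₁ y x = f y x := by
        apply hsame
        intro h
        rw [Sym2.eq_iff] at h
        tauto
      rw [h1, h2]
      exact hR
    obtain ⟨g, hg, hdvg₂⟩ := ih c f₁ hf₁ hchain₁ (List.nodup_cons.1 hnodup).2
      (by rwa [List.getLast?_cons_cons] at hlast)
    refine ⟨g, hg, fun u => ?_⟩
    have e1 := hdvg₂ u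
    have e2 := hdvg₁ u
    rw [e1, e2]
    ring

lemma flow_exists (hfeas : ftpuFeasible X M s t k) (hst : s ≠ t) :
    ∀ r : ℕ, r ≤ k + 1 → ∃ f : V → V → ℕ,
      (∀ u v, f u v ≤ cap X M k u v) ∧
      (∀ u ∈ vset X s t, u ≠ s → u ≠ t → dvg X s t f u = 0) ∧
      dvg X s t f s = (r : ℤ) := by
  intro r
  induction r with
  | zero =>
    intro _
    exact ⟨fun _ _ => 0, fun _ _ => Nat.zero_le _, fun u _ _ _ => by simp [dvg],
      by simp [dvg]⟩
  | succ r ih =>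
    intro hr
    obtain ⟨f, hf, hcons, hval⟩ := ih (by omega)
    classical
    set Rel : V → V → Prop := fun x y => f x y < cap X M k x y + f y x with hRel
    by_cases hreach : Relation.ReflTransGen Rel s t
    · obtain ⟨l, hc, hnd, hlast⟩ := exists_nodup_chain' hreach
      obtain ⟨g, hg, hdvg⟩ := augment_path t l s f hf hc hnd hlast
      refine ⟨g, hg, fun u hu hus hut => ?_, ?_⟩
      · rw [hdvg u, hcons u hu hus hut, if_neg hus, if_neg hut]; ring
      · rw [hdvg s, hval, if_pos rfl, if_neg hst]
        push_cast; ring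
    · exfalso
      set P : V → Prop := fun v => Relation.ReflTransGen Rel s v with hP
      have hPs : P s := Relation.ReflTransGen.refl
      have hPt : ¬ P t := hreach
      have hcut := flow_cut (s := s) (t := t) f r hcons hval P hPs hPt
      set A := (vset X s t).filter P with hA
      set B := (vset X s t).filter (fun v => ¬ P v) with hB
      have hsat : ∀ u ∈ A, ∀ v ∈ B, (cap X M k u v : ℤ) ≤ (f u v : ℤ) - (f v u : ℤ) := by
        intro u hu v hv
        have hPu : P u := (mem_filter.1 hu).2
        have hPv : ¬ P v := (mem_filter.1 hv).2
        have : ¬ Rel u v := fun hR => hPv (hPu.tail hR)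
        rw [hRel] at this
        push_neg at this
        have := this
        omega
      have hcs : (∑ u ∈ A, ∑ v ∈ B, (cap X M k u v : ℤ)) ≤ (r : ℤ) := by
        calc (∑ u ∈ A, ∑ v ∈ B, (cap X M k u v : ℤ))
            ≤ ∑ u ∈ A, ∑ v ∈ B, ((f u v : ℤ) - (f v u : ℤ)) :=
              Finset.sum_le_sum (fun u hu => Finset.sum_le_sum (fun v hv => hsat u hu v hv))
          _ = (r : ℤ) := hcut
      have hcsn : (∑ u ∈ A, ∑ v ∈ B, cap X M k u v) ≤ k := by
        have hrk : r ≤ k := by omega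
        have h2 : (∑ u ∈ A, ∑ v ∈ B, (cap X M k u v : ℤ)) ≤ (k : ℤ) :=
          le_trans hcs (by exact_mod_cast hrk)
        exact_mod_cast h2
      exact cutcap_ge hfeas P hPs hPt hcsn

end FTPProof2

/-- If `X` is feasible for undirected FTP, then there is an orientation `D` of `X`
(each edge of `X` receives exactly one of its two directions) such that for every
`F ⊆ M` with `|F| ≤ k`, the digraph consisting of the arcs of `D` whose underlying
edge is not in `F` contains a directed `s`-`t` path. -/
theorem stmt0 {V : Type*} [DecidableEq V] (E X M : Finset (Sym2 V)) (s t : V) (k : ℕ)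
    (hXE : X ⊆ E) (hME : M ⊆ E)
    (hfeas : ftpuFeasible X M s t k) :
    ∃ D : Finset (V × V),
      (∀ p ∈ D, Sym2.mk p.1 p.2 ∈ X) ∧
      (∀ e ∈ X, ∃! p : V × V, p ∈ D ∧ Sym2.mk p.1 p.2 = e) ∧
      ∀ F ⊆ M, F.card ≤ k →
        Relation.ReflTransGen (fun x y => (x, y) ∈ D ∧ Sym2.mk x y ∉ F) s t := by
  classical
  by_cases hst : s = t
  · refine ⟨X.image (fun e => Quot.out e), ?_, ?_, ?_⟩
    · intro p hp
      obtain ⟨e, he, hpe⟩ := Finset.mem_image.1 hp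
      have h1 : Sym2.mk p.1 p.2 = e := by rw [← hpe]; exact Quot.out_eq e
      rwa [h1]
    · intro e he
      refine ⟨Quot.out e, ⟨Finset.mem_image_of_mem _ he, Quot.out_eq e⟩, ?_⟩
      rintro p ⟨hp, hpe⟩
      obtain ⟨e', he', hpe'⟩ := Finset.mem_image.1 hp
      have h1 : Sym2.mk p.1 p.2 = e' := by rw [← hpe']; exact Quot.out_eq e'
      have h2 : e' = e := by rw [← h1, hpe]
      rw [← hpe', h2]
    · intro F _ _
      rw [hst]
  · obtain ⟨f, hf, hcons, hval⟩ := FTPProof2.flow_exists hfeas hst (k+1) le_rfl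
    set g : V → V → ℕ := fun u v => f u v - min (f u v) (f v u) with hg
    have hgle : ∀ u v, g u v ≤ f u v := fun u v => Nat.sub_le _ _
    have hgcap : ∀ u v, g u v ≤ FTPProof2.cap X M k u v :=
      fun u v => le_trans (hgle u v) (hf u v)
    have hgd : ∀ u, FTPProof2.dvg X s t g u = FTPProof2.dvg X s t f u := by
      intro u
      rw [FTPProof2.dvg, FTPProof2.dvg]
      have h1 : ∀ x y : V, (g x y : ℤ) = (f x y : ℤ) - min (f x y : ℤ) (f y x : ℤ) := by
        intro x y
        rw [hg]
        simp only []
        rw [Nat.cast_sub (min_le_left _ _), Nat.cast_min]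
      rw [Finset.sum_congr rfl (fun v _ => h1 u v), Finset.sum_congr rfl (fun v _ => h1 v u),
        Finset.sum_sub_distrib, Finset.sum_sub_distrib]
      have h2 : ∑ v ∈ FTPProof2.vset X s t, min (f u v : ℤ) (f v u : ℤ)
          = ∑ v ∈ FTPProof2.vset X s t, min (f v u : ℤ) (f u v : ℤ) :=
        Finset.sum_congr rfl (fun v _ => min_comm _ _)
      omega
    have hcancel : ∀ u v, 0 < g u v → g v u = 0 := by
      intro u v h
      rw [hg] at h ⊢
      simp only [] at h ⊢
      rcases le_total (f u v) (f v u) with hle | hle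
      · rw [min_eq_left hle] at h; omega
      · rw [min_eq_left hle]; omega
    set dir : Sym2 V → V × V :=
      fun e => if 0 < g e.out.2 e.out.1 then (e.out.2, e.out.1) else e.out with hdir
    have hdirmk : ∀ e : Sym2 V, Sym2.mk (dir e).1 (dir e).2 = e := by
      intro e
      have hout : Sym2.mk e.out.1 e.out.2 = e := Quot.out_eq e
      rw [hdir]
      simp only []
      split_ifs
      · show Sym2.mk e.out.2 e.out.1 = e
        rw [Sym2.eq_swap]
        exact hout
      · exact hout
    set D := X.image dir with hD
    have hD1 : ∀ p ∈ D, Sym2.mk p.1 p.2 ∈ X := by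
      intro p hp
      obtain ⟨e, he, hpe⟩ := Finset.mem_image.1 hp
      rw [← hpe, hdirmk e]; exact he
    have hDpos : ∀ u v, 0 < g u v → s(u,v) ∈ X → (u, v) ∈ D := by
      intro u v hpos hX
      have h0 : g v u = 0 := hcancel u v hpos
      have hout : Sym2.mk (s(u,v)).out.1 (s(u,v)).out.2 = s(u,v) := Quot.out_eq _
      rw [Sym2.mk_eq_mk_iff (p := (s(u,v)).out) (q := (u, v))] at hout
      rw [hD, Finset.mem_image]
      refine ⟨s(u,v), hX, ?_⟩
      rw [hdir]
      simp only []
      rcases hout with h' | h'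
      · rw [h']
        simp [h0]
      · rw [h']
        simp [hpos]
    refine ⟨D, hD1, ?_, ?_⟩
    · intro e he
      refine ⟨dir e, ⟨Finset.mem_image_of_mem _ he, hdirmk e⟩, ?_⟩
      rintro p ⟨hp, hpe⟩
      obtain ⟨e', he', hpe'⟩ := Finset.mem_image.1 hp
      have h1 : e' = e := by rw [← hpe, ← hpe', hdirmk e']
      rw [← hpe', h1]
    · intro F hFM hFc
      by_contra hnr
      set P : V → Prop :=
        fun v => Relation.ReflTransGen (fun x y => (x, y) ∈ D ∧ Sym2.mk x y ∉ F) s v with hP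
      have hPs : P s := Relation.ReflTransGen.refl
      have hPt : ¬ P t := hnr
      have hcut := FTPProof2.flow_cut (s := s) (t := t) g (((k+1 : ℕ)) : ℤ)
          (fun u hu h1 h2 => by rw [hgd u]; exact hcons u hu h1 h2)
          (by rw [hgd s]; exact hval) P hPs hPt
      set A := (FTPProof2.vset X s t).filter P with hA
      set B := (FTPProof2.vset X s t).filter (fun v => ¬ P v) with hB
      have key : ∀ u ∈ A, ∀ v ∈ B, 0 < g u v → s(u, v) ∈ F ∧ g u v = 1 := by
        intro u hu v hv hpos
        have hX : s(u,v) ∈ X := (FTPProof2.mem_vset_of_cap_pos (s := s) (t := t)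
          (lt_of_lt_of_le hpos (hgcap u v))).1
        have hD' : (u, v) ∈ D := hDpos u v hpos hX
        have hPu : P u := (Finset.mem_filter.1 hu).2
        have hPv : ¬ P v := (Finset.mem_filter.1 hv).2
        have hF : s(u, v) ∈ F := by
          by_contra hFn
          exact hPv (hPu.tail ⟨hD', hFn⟩)
        have hM : s(u,v) ∈ M := hFM hF
        have hcap1 : FTPProof2.cap X M k u v = 1 := by
          rw [FTPProof2.cap, if_pos hX, if_pos hM]
        have h5 := hgcap u v
        exact ⟨hF, by omega⟩
      set Acr := (A ×ˢ B).filter (fun p => 0 < g p.1 p.2) with hAcr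
      have h1 : ((k : ℤ) + 1) ≤ ∑ u ∈ A, ∑ v ∈ B, (g u v : ℤ) := by
        have hnn : (0 : ℤ) ≤ ∑ u ∈ A, ∑ v ∈ B, (g v u : ℤ) :=
          Finset.sum_nonneg fun u _ => Finset.sum_nonneg fun v _ => by positivity
        have hsplit : ∑ u ∈ A, ∑ v ∈ B, ((g u v : ℤ) - (g v u : ℤ))
            = (∑ u ∈ A, ∑ v ∈ B, (g u v : ℤ)) - ∑ u ∈ A, ∑ v ∈ B, (g v u : ℤ) := by
          rw [← Finset.sum_sub_distrib]
          exact Finset.sum_congr rfl fun u _ => Finset.sum_sub_distrib _ _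
        rw [hsplit] at hcut
        push_cast at hcut
        omega
      have h2 : ∑ u ∈ A, ∑ v ∈ B, (g u v : ℤ) = (Acr.card : ℤ) := by
        rw [← Finset.sum_product A B (fun p => (g p.1 p.2 : ℤ))]
        rw [← Finset.sum_filter_of_ne (p := fun p : V × V => 0 < g p.1 p.2)
          (fun p _ hne => Nat.pos_of_ne_zero (fun h0 => hne (by simp [h0])))]
        rw [← hAcr]
        have hone : ∀ p ∈ Acr, (g p.1 p.2 : ℤ) = 1 := by
          intro p hp
          rw [hAcr, Finset.mem_filter] at hp
          obtain ⟨hpm, hpos⟩ := hp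
          obtain ⟨h4, h5⟩ := Finset.mem_product.1 hpm
          rw [(key p.1 h4 p.2 h5 hpos).2]
          norm_num
        rw [Finset.sum_congr rfl hone, Finset.sum_const, nsmul_eq_mul, mul_one]
      have h3 : Acr.card ≤ F.card := by
        apply Finset.card_le_card_of_injOn (fun p => Sym2.mk p.1 p.2)
        · intro p hp
          rw [Finset.mem_coe, hAcr, Finset.mem_filter] at hp
          obtain ⟨hpm, hpos⟩ := hp
          obtain ⟨h4, h5⟩ := Finset.mem_product.1 hpm
          have h6 := key p.1 h4 p.2 h5 hpos
          exact Finset.mem_coe.2 h6.1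
        · intro p hp q hq heq
          have heq : s(p.1, p.2) = s(q.1, q.2) := heq
          rw [Sym2.mk_eq_mk_iff] at heq
          rcases heq with h' | h'
          · exact h'
          · exfalso
            have hp' := Finset.mem_coe.1 hp
            have hq' := Finset.mem_coe.1 hq
            rw [hAcr, Finset.mem_filter] at hp' hq'
            obtain ⟨hpm, hppos⟩ := hp'
            obtain ⟨hqm, hqpos⟩ := hq'
            obtain ⟨hp1, hp2⟩ := Finset.mem_product.1 hpm
            obtain ⟨hq1, hq2⟩ := Finset.mem_product.1 hqm
            have hq1' : q.1 = p.2 := by rw [h']; simp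
            rw [hq1'] at hq1
            have hPp2 : P p.2 := (Finset.mem_filter.1 hq1).2
            have hnPp2 : ¬ P p.2 := (Finset.mem_filter.1 hp2).2
            exact hnPp2 hPp2
      have hcard : (Acr.card : ℤ) ≥ (k : ℤ) + 1 := by omega
      have : (F.card : ℤ) ≤ (k : ℤ) := by exact_mod_cast hFc
      have : (Acr.card : ℤ) ≤ (F.card : ℤ) := by exact_mod_cast h3
      omega
end

section
/- Let D = (V,A) be a directed graph, s,t ∈ V, M ⊆ A, k ≥ 0, and let S ⊆ A. If for every vertex set V' ⊆ V with s ∈ V' and t ∉ V' the cut δ⁺(V') ∩ S either contains at least one safe arc or contains at least k+1 arcs, then S is a feasible FTP solution, i.e., for every F ⊆ M with |F| ≤ k the graph (V, S∖F) contains a directed s-t path. -/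
/-- `cutArcs S V'` is `δ⁺(V') ∩ S`: the arcs of `S` with tail in `V'` and head outside `V'`. -/
def cutArcs {V : Type*} [DecidableEq V] (S : Finset (V × V)) (V' : Finset V) :
    Finset (V × V) :=
  S.filter (fun e => e.1 ∈ V' ∧ e.2 ∉ V')

/-- Feasibility for Fault-Tolerant Path: for every `F ⊆ M` with `|F| ≤ k`,
the digraph `(V, S \ F)` contains a directed `s`-`t` path. -/
def ftpFeasible {V : Type*} [DecidableEq V] (S M : Finset (V × V)) (s t : V) (k : ℕ) : Prop :=
  ∀ F ⊆ M, F.card ≤ k → Relation.ReflTransGen (fun x y => (x, y) ∈ S \ F) s t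

/-- If every `s`-`t` cut of `(V, S)` contains at least one safe arc or at least `k + 1`
arcs, then `S` is a feasible FTP solution. -/
theorem stmt2 {V : Type*} [Fintype V] [DecidableEq V] (A S M : Finset (V × V)) (s t : V)
    (k : ℕ) (hSA : S ⊆ A) (hMA : M ⊆ A)
    (hcut : ∀ V' : Finset V, s ∈ V' → t ∉ V' →
      (∃ e ∈ cutArcs S V', e ∉ M) ∨ k + 1 ≤ (cutArcs S V').card) :
    ftpFeasible S M s t k := by
  intro F hFM hFk
  by_contra hpath
  classical
  set R : Finset V :=
    Finset.univ.filter (fun v => Relation.ReflTransGen (fun x y => (x, y) ∈ S \ F) s v) with hR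
  have hsR : s ∈ R := by simp [hR]; exact .refl
  have htR : t ∉ R := by simpa [hR] using hpath
  have hclosed : cutArcs S R ⊆ F := by
    intro e he
    simp only [cutArcs, hR, Finset.mem_filter, Finset.mem_univ, true_and] at he
    obtain ⟨heS, h1, h2⟩ := he
    by_contra heF
    exact h2 (h1.tail (by simp [Finset.mem_sdiff, heS, heF]))
  rcases hcut R hsR htR with ⟨e, he, heM⟩ | hcard
  · exact heM (hFM (hclosed he))
  · have := (Finset.card_le_card hclosed).trans hFk
    omega
end

section
/- Let D = (V,A) be a directed graph, s,t ∈ V, and M ⊆ A. Every feasible FTP solution S* for k = 1 contains a robust s-t bipath: there exist directed s-t paths P₁, P₂ with arc sets P₁, P₂ ⊆ S* such that P₁ ∩ P₂ ∩ M = ∅. -/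
set_option linter.unusedSectionVars false
set_option maxHeartbeats 1000000

namespace FTPaux
open Relation

variable {V : Type*} [DecidableEq V]

lemma rtg_mono {α : Type*} {r p : α → α → Prop} {a b : α} (h : ∀ a b, r a b → p a b)
    (hab : ReflTransGen r a b) : ReflTransGen p a b :=
  Relation.ReflTransGen.mono h _ _ hab

def pairs (L : List V) : List (V × V) := L.zip L.tail

def arcs (L : List V) : Finset (V × V) := (pairs L).toFinset

@[simp] lemma pairs_nil : pairs ([] : List V) = [] := rfl
@[simp] lemma pairs_single (a : V) : pairs [a] = [] := rfl
@[simp] lemma pairs_cons_cons (a b : V) (l : List V) :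
    pairs (a :: b :: l) = (a, b) :: pairs (b :: l) := rfl

@[simp] lemma arcs_single (a : V) : arcs [a] = ∅ := rfl
@[simp] lemma arcs_pair (a b : V) : arcs [a, b] = {(a, b)} := rfl

lemma arcs_cons_cons (a b : V) (l : List V) :
    arcs (a :: b :: l) = insert (a, b) (arcs (b :: l)) := by simp [arcs]

lemma mem_arcs {p : V × V} {L : List V} : p ∈ arcs L ↔ p ∈ pairs L := by
  simp [arcs]

def IsW (s t : V) (L : List V) : Prop := L.head? = some s ∧ L.getLast? = some t

lemma fst_mem_of_mem_pairs {p : V × V} : ∀ {L : List V}, p ∈ pairs L → p.1 ∈ L := by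
  intro L
  induction L with
  | nil => simp [pairs]
  | cons x l ih =>
    cases l with
    | nil => simp [pairs]
    | cons y l' =>
      intro hp
      rcases (by simpa using hp : p = (x, y) ∨ p ∈ pairs (y :: l')) with rfl | hp'
      · simp
      · exact List.mem_cons_of_mem _ (ih hp')

lemma snd_mem_of_mem_pairs {p : V × V} : ∀ {L : List V}, p ∈ pairs L → p.2 ∈ L := by
  intro L
  induction L with
  | nil => simp [pairs]
  | cons x l ih =>
    cases l with
    | nil => simp [pairs]
    | cons y l' =>
      intro hp
      rcases (by simpa using hp : p = (x, y) ∨ p ∈ pairs (y :: l')) with rfl | hp'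
      · simp
      · exact List.mem_cons_of_mem _ (ih hp')

lemma mem_tail_head {v : V} : ∀ {L : List V}, v ∈ L.tail → ∃ p ∈ pairs L, p.2 = v := by
  intro L
  induction L with
  | nil => simp
  | cons x l ih =>
    cases l with
    | nil => simp
    | cons y l' =>
      intro hv
      rcases (by simpa using hv : v = y ∨ v ∈ l') with rfl | hv'
      · exact ⟨(x, v), by simp, rfl⟩
      · obtain ⟨p, hp, hpv⟩ := ih (by simpa using hv')
        exact ⟨p, by simp [hp], hpv⟩


-- append
lemma pairs_append {L₁ L₂ : List V} {u : V} (h₁ : L₁.getLast? = some u)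
    (h₂ : L₂.head? = some u) : pairs (L₁ ++ L₂.tail) = pairs L₁ ++ pairs L₂ := by
  induction L₁ with
  | nil => simp at h₁
  | cons x l ih =>
    cases l with
    | nil =>
      simp at h₁
      subst h₁
      cases L₂ with
      | nil => simp at h₂
      | cons y l₂ =>
        simp at h₂
        subst h₂
        simp [pairs]
    | cons y l' =>
      have h₁' : (y :: l').getLast? = some u := by rwa [List.getLast?_cons_cons] at h₁
      have := ih h₁'
      simp only [List.cons_append, pairs_cons_cons] at this ⊢
      rw [this]

lemma append_walk {s u t : V} {L₁ L₂ : List V} (h₁ : IsW s u L₁) (h₂ : IsW u t L₂) :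
    IsW s t (L₁ ++ L₂.tail) ∧ arcs (L₁ ++ L₂.tail) = arcs L₁ ∪ arcs L₂ := by
  obtain ⟨h1a, h1b⟩ := h₁
  obtain ⟨h2a, h2b⟩ := h₂
  constructor
  · constructor
    · cases L₁ with
      | nil => simp at h1a
      | cons x l => simpa using h1a
    · rcases ht : L₂.tail with _ | ⟨y, l⟩
      · -- L₂ = [u], so t = u
        cases L₂ with
        | nil => simp at h2a
        | cons z l₂ =>
          simp at h2a; subst h2a
          simp at ht; subst ht
          simp at h2b
          simpa [h2b] using h1b
      · have hyl : (y :: l).getLast? = some t := by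
          cases L₂ with
          | nil => simp at h2a
          | cons z l₂ =>
            simp at ht; subst ht
            rwa [List.getLast?_cons_cons] at h2b
        rw [List.getLast?_append]
        simp [hyl]
  · rw [arcs, pairs_append h1b h2a]
    simp [arcs]

-- walks from/to relations
lemma walk_of_rtg {r : V → V → Prop} {s t : V} (h : Relation.ReflTransGen r s t) :
    ∃ L, IsW s t L ∧ ∀ p ∈ arcs L, r p.1 p.2 := by
  induction h with
  | refl => exact ⟨[s], ⟨rfl, rfl⟩, by simp⟩
  | tail hsb hr ih =>
    obtain ⟨L, hW, hA⟩ := ih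
    rename_i b c
    refine ⟨L ++ [c], ?_, ?_⟩
    · have := append_walk hW (show IsW b c [b, c] from ⟨rfl, rfl⟩)
      simpa using this.1
    · have := (append_walk hW (show IsW b c [b, c] from ⟨rfl, rfl⟩)).2
      simp only [List.tail_cons] at this
      rw [this]
      intro p hp
      rcases Finset.mem_union.mp hp with hp | hp
      · exact hA p hp
      · simp at hp; subst hp; exact hr

lemma rtg_of_walk {r : V → V → Prop} {t : V} :
    ∀ (L : List V) (s : V), IsW s t L → (∀ p ∈ arcs L, r p.1 p.2) →
      Relation.ReflTransGen r s t := by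
  intro L
  induction L with
  | nil => intro s h; exact absurd h.1 (by simp)
  | cons x l ih =>
    intro s h hA
    have hx : x = s := by simpa [IsW] using h.1
    subst hx
    cases l with
    | nil =>
      have : x = t := by simpa [IsW] using h.2
      subst this; exact Relation.ReflTransGen.refl
    | cons y l' =>
      have h' : IsW y t (y :: l') := ⟨rfl, by
        have := h.2; rwa [List.getLast?_cons_cons] at this⟩
      have step : r x y := hA (x, y) (by simp [arcs_cons_cons])
      exact Relation.ReflTransGen.head step
        (ih y h' (fun p hp => hA p (by simp [arcs_cons_cons, mem_arcs] at hp ⊢; exact Or.inr hp)))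

lemma walk_rch_to {r : V → V → Prop} {v : V} :
    ∀ (L : List V) (s : V), L.head? = some s → (∀ p ∈ arcs L, r p.1 p.2) → v ∈ L →
      Relation.ReflTransGen r s v := by
  intro L
  induction L with
  | nil => simp
  | cons x l ih =>
    intro s hh hA hv
    have hx : x = s := by simpa using hh
    subst hx
    rcases List.mem_cons.mp hv with rfl | hv'
    · exact Relation.ReflTransGen.refl
    · cases l with
      | nil => simp at hv'
      | cons y l' =>
        have step : r x y := hA (x, y) (by simp [arcs_cons_cons])
        exact Relation.ReflTransGen.head step
          (ih y rfl (fun p hp => hA p (by simp [arcs_cons_cons, mem_arcs] at hp ⊢; exact Or.inr hp)) hv')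

lemma walk_rch_from {r : V → V → Prop} {t : V} :
    ∀ (L : List V) (v : V), L.getLast? = some t → (∀ p ∈ arcs L, r p.1 p.2) → v ∈ L →
      Relation.ReflTransGen r v t := by
  intro L
  induction L with
  | nil => simp
  | cons x l ih =>
    intro v hl hA hv
    cases l with
    | nil =>
      simp at hl hv
      subst hl; subst hv
      exact Relation.ReflTransGen.refl
    | cons y l' =>
      have hl' : (y :: l').getLast? = some t := by rwa [List.getLast?_cons_cons] at hl
      have hAr : ∀ p ∈ arcs (y :: l'), r p.1 p.2 := fun p hp =>
        hA p (by simp [arcs_cons_cons, mem_arcs] at hp ⊢; exact Or.inr hp)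
      rcases List.mem_cons.mp hv with rfl | hv'
      · have step : r v y := hA (v, y) (by simp [arcs_cons_cons])
        exact Relation.ReflTransGen.head step (ih y hl' hAr (by simp))
      · exact ih v hl' hAr hv'


lemma pairs_suffix {l₁ l₂ : List V} (h : l₁ <:+ l₂) : List.Sublist (pairs l₁) (pairs l₂) := by
  obtain ⟨p, rfl⟩ := h
  induction p with
  | nil => simp
  | cons x p' ih =>
    refine ih.trans ?_
    rcases hpl : p' ++ l₁ with _ | ⟨a, r⟩
    · simp [hpl]
    · rw [List.cons_append, hpl, pairs_cons_cons]
      exact List.sublist_cons_self _ _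

lemma arcs_suffix {l₁ l₂ : List V} (h : l₁ <:+ l₂) : arcs l₁ ⊆ arcs l₂ := by
  intro p hp
  rw [mem_arcs] at hp ⊢
  exact (pairs_suffix h).subset hp

lemma simplify_aux : ∀ (n : ℕ) (L : List V) (s t : V), L.length ≤ n → IsW s t L →
    ∃ L', IsW s t L' ∧ L'.Nodup ∧ arcs L' ⊆ arcs L ∧ ∀ v ∈ L', v ∈ L := by
  intro n
  induction n with
  | zero =>
    intro L s t hl hW
    have hnil : L = [] := List.length_eq_zero_iff.mp (Nat.le_zero.mp hl)
    exact absurd hW.1 (by simp [hnil])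
  | succ n ih =>
    intro L s t hl hW
    cases L with
    | nil => exact absurd hW.1 (by simp)
    | cons x l =>
      have hx : x = s := by simpa using hW.1
      subst hx
      by_cases hs : x ∈ l
      · obtain ⟨p, q, rfl⟩ := List.append_of_mem hs
        have hsuf : (x :: q) <:+ (x :: (p ++ x :: q)) := ⟨x :: p, by simp⟩
        have hW' : IsW x t (x :: q) := by
          refine ⟨rfl, ?_⟩
          have h2 := hW.2
          rw [show x :: (p ++ x :: q) = (x :: p) ++ (x :: q) by simp] at h2
          rw [List.getLast?_append] at h2
          rcases hq : (x :: q).getLast? with _ | w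
          · exact absurd hq (by simp)
          · rw [hq] at h2
            simpa using h2
        have hlen : (x :: q).length ≤ n := by
          simp at hl ⊢; omega
        obtain ⟨L', a, b, c, d⟩ := ih (x :: q) x t hlen hW'
        exact ⟨L', a, b, c.trans (arcs_suffix hsuf), fun v hv => hsuf.subset (d v hv)⟩
      · cases l with
        | nil =>
          have : x = t := by simpa using hW.2
          subst this
          exact ⟨[x], hW, by simp, by simp [arcs], by simp⟩
        | cons y l' =>
          have hW' : IsW y t (y :: l') := ⟨rfl, by
            have := hW.2; rwa [List.getLast?_cons_cons] at this⟩
          obtain ⟨P, hPW, hPnd, hPa, hPv⟩ := ih (y :: l') y t (by simp at hl ⊢; omega) hW'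
          cases P with
          | nil => exact absurd hPW.1 (by simp)
          | cons y' P' =>
            have hy' : y = y' := Eq.symm (by simpa using hPW.1)
            subst hy'
            refine ⟨x :: y :: P', ⟨rfl, by rw [List.getLast?_cons_cons]; exact hPW.2⟩, ?_, ?_, ?_⟩
            · exact List.nodup_cons.mpr ⟨fun hc => hs (hPv x hc), hPnd⟩
            · rw [arcs_cons_cons, arcs_cons_cons]
              intro p hp
              rcases Finset.mem_insert.mp hp with rfl | hp'
              · exact Finset.mem_insert_self _ _
              · exact Finset.mem_insert_of_mem (hPa hp')
            · intro v hv
              rcases List.mem_cons.mp hv with rfl | hv'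
              · simp
              · exact List.mem_cons_of_mem _ (hPv v hv')

lemma simplify {L : List V} {s t : V} (hW : IsW s t L) :
    ∃ L', IsW s t L' ∧ L'.Nodup ∧ arcs L' ⊆ arcs L :=
  let ⟨L', a, b, c, _⟩ := simplify_aux L.length L s t le_rfl hW
  ⟨L', a, b, c⟩

lemma decompose_start {r : V → V → Prop} {s t : V} {L : List V} (hW : IsW s t L)
    (hA : ∀ p ∈ arcs L, r p.1 p.2) (hns : ∀ x y, r x y → y ≠ s) (hts : t ≠ s) :
    ∃ x L', IsW x t L' ∧ r s x ∧ arcs L = insert (s, x) (arcs L') ∧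
      ∀ p ∈ arcs L', p.1 ≠ s := by
  cases L with
  | nil => exact absurd hW.1 (by simp)
  | cons x₀ l =>
    have hx : x₀ = s := by simpa using hW.1
    subst hx
    cases l with
    | nil => exact absurd (show x₀ = t by simpa using hW.2) (Ne.symm hts)
    | cons y l' =>
      have hrsy : r x₀ y := hA (x₀, y) (by simp [arcs_cons_cons])
      have hWy : IsW y t (y :: l') := ⟨rfl, by
        have := hW.2; rwa [List.getLast?_cons_cons] at this⟩
      have hAy : ∀ p ∈ arcs (y :: l'), r p.1 p.2 := fun p hp =>
        hA p (by rw [arcs_cons_cons]; exact Finset.mem_insert_of_mem hp)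
      have hvert : ∀ v ∈ (y :: l'), v ≠ x₀ := by
        intro v hv
        rcases List.mem_cons.mp hv with rfl | hv'
        · exact hns _ _ hrsy
        · obtain ⟨p, hp, hpv⟩ := mem_tail_head (L := y :: l') (by simpa using hv')
          exact hpv ▸ hns _ _ (hAy p (mem_arcs.mpr hp))
      exact ⟨y, y :: l', hWy, hrsy, by rw [arcs_cons_cons], fun p hp =>
        hvert p.1 (fst_mem_of_mem_pairs (mem_arcs.mp hp))⟩

lemma arc_tail_inj : ∀ {L : List V}, L.Nodup → ∀ {p q : V × V}, p ∈ arcs L → q ∈ arcs L →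
    p.1 = q.1 → p = q := by
  intro L
  induction L with
  | nil => simp [arcs, pairs]
  | cons x l ih =>
    intro hnd p q hp hq hpq
    cases l with
    | nil => simp [arcs, pairs] at hp
    | cons y l' =>
      rw [arcs_cons_cons] at hp hq
      have hxl : x ∉ (y :: l') := (List.nodup_cons.mp hnd).1
      rcases Finset.mem_insert.mp hp with rfl | hp' <;>
        rcases Finset.mem_insert.mp hq with h | hq'
      · rw [h]
      · exact absurd (hpq ▸ fst_mem_of_mem_pairs (mem_arcs.mp hq')) (by simpa using hxl)
      · exact absurd (hpq ▸ fst_mem_of_mem_pairs (mem_arcs.mp hp')) (by simp [h]; simpa using hxl)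
      · exact ih (List.nodup_cons.mp hnd).2 hp' hq' hpq

-- reachability cut lemmas
lemma rch_stay {r : V → V → Prop} {Y : V → Prop} {s t : V}
    (h : ReflTransGen r s t) (hcl : ∀ x y, r x y → Y x → Y y) (hs : Y s) : Y t := by
  induction h with
  | refl => exact hs
  | tail _ hr ih => exact hcl _ _ hr ih

lemma firstExit {r : V → V → Prop} {Y : V → Prop} {s t : V}
    (h : ReflTransGen r s t) (hs : Y s) (ht : ¬ Y t) :
    ∃ a b, r a b ∧ Y a ∧ ¬ Y b ∧ ReflTransGen (fun x y => r x y ∧ Y y) s a := by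
  have main : ∀ u, ReflTransGen r s u →
      (ReflTransGen (fun x y => r x y ∧ Y y) s u ∧ Y u) ∨
      ∃ a b, r a b ∧ Y a ∧ ¬ Y b ∧ ReflTransGen (fun x y => r x y ∧ Y y) s a := by
    intro u hu
    induction hu with
    | refl => exact Or.inl ⟨ReflTransGen.refl, hs⟩
    | tail hsb hr ih =>
      rename_i b c
      rcases ih with ⟨hres, hYb⟩ | hfound
      · by_cases hYc : Y c
        · exact Or.inl ⟨hres.tail ⟨hr, hYc⟩, hYc⟩
        · exact Or.inr ⟨b, c, hr, hYb, hYc, hres⟩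
      · exact Or.inr hfound
  rcases main t h with ⟨_, hYt⟩ | h'
  · exact absurd hYt ht
  · exact h'

lemma outTail {r : V → V → Prop} {Y : V → Prop} {s t : V}
    (h : ReflTransGen r s t) (hs : Y s) :
    ¬ Y t → ∃ a b, r a b ∧ Y a ∧ ¬ Y b ∧
      ReflTransGen (fun x y => r x y ∧ ¬ Y x ∧ ¬ Y y) b t := by
  induction h with
  | refl => intro ht; exact absurd hs ht
  | tail hsb hr ih =>
    rename_i b c
    intro ht
    by_cases hb : Y b
    · exact ⟨b, c, hr, hb, ht, ReflTransGen.refl⟩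
    · obtain ⟨a, b', hr', hY, hnY, hres⟩ := ih hb
      exact ⟨a, b', hr', hY, hnY, hres.tail ⟨hr, hb, ht⟩⟩

lemma rch_eq_of_empty {r : V → V → Prop} {s t : V} (h : ReflTransGen r s t)
    (hr : ∀ x y, ¬ r x y) : s = t := by
  induction h with
  | refl => rfl
  | tail _ hstep _ => exact absurd hstep (hr _ _)

lemma tri_empty {A B M : Finset (V × V)} (h : ∀ p, p ∈ A → p ∈ B → p ∈ M → False) :
    A ∩ B ∩ M = ∅ := by
  rw [Finset.eq_empty_iff_forall_notMem]
  intro p hp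
  simp only [Finset.mem_inter] at hp
  exact h p hp.1.1 hp.1.2 hp.2


def Rch (T : Finset (V × V)) (s t : V) : Prop :=
  Relation.ReflTransGen (fun x y => (x, y) ∈ T) s t

lemma rch_mono {T T' : Finset (V × V)} {s t : V} (h : T ⊆ T') (hr : Rch T s t) :
    Rch T' s t :=
  FTPaux.rtg_mono (fun _ _ hxy => h hxy) hr

def Sol (T M : Finset (V × V)) (s t₁ t₂ : V) : Prop :=
  ∃ L₁ L₂ : List V, IsW s t₁ L₁ ∧ IsW s t₂ L₂ ∧ arcs L₁ ⊆ T ∧ arcs L₂ ⊆ T ∧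
    arcs L₁ ∩ arcs L₂ ∩ M = ∅

/-- Case B1 of the induction: `t₁` is not reachable when `f` is removed. -/
lemma caseB1 {n : ℕ}
    (IH : ∀ T' : Finset (V × V), T'.card ≤ n → ∀ M s t₁ t₂, Rch T' s t₁ → Rch T' s t₂ →
      (∀ h ∈ M, Rch (T'.erase h) s t₁ ∨ Rch (T'.erase h) s t₂) → Sol T' M s t₁ t₂)
    {T M : Finset (V × V)} {s t₁ t₂ : V} (hcard : T.card ≤ n + 1)
    {f : V × V} (hfM : f ∈ M) (hfT : f ∈ T)
    (H1 : Rch T s t₁) (H2 : Rch T s t₂)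
    (H3 : ∀ h ∈ M, Rch (T.erase h) s t₁ ∨ Rch (T.erase h) s t₂)
    (hn1 : ¬ Rch (T.erase f) s t₁) : Sol T M s t₁ t₂ := by
  classical
  have ht2f : Rch (T.erase f) s t₂ := (H3 f hfM).resolve_left hn1
  -- the reachable set in T.erase f
  set Y : V → Prop := fun v => Rch (T.erase f) s v with hY
  have hYs : Y s := Relation.ReflTransGen.refl
  -- first exit of a walk witnessing H1
  obtain ⟨a', b', hab, hYa, hYb, hpre⟩ := firstExit (Y := Y) H1 hYs hn1
  have hef : (a', b') = f := by
    by_contra hne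
    exact hYb (hYa.tail (Finset.mem_erase.mpr ⟨hne, hab⟩))
  -- prefix reaches a' inside T.erase f
  have hH1in : Rch (T.erase f) s a' := by
    refine FTPaux.rtg_mono (fun x y hxy => ?_) hpre
    obtain ⟨hxy, hYy⟩ := hxy
    refine Finset.mem_erase.mpr ⟨fun hEq => ?_, hxy⟩
    rw [← hef] at hEq
    exact hYb (((Prod.mk.injEq _ _ _ _).mp hEq).2 ▸ hYy)
  -- the suffix of the walk, beyond the cut, stays outside Y
  obtain ⟨a'', b'', hab2, hYa2, hYb2, hsuf⟩ := outTail (Y := Y) H1 hYs hn1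
  have hef2 : (a'', b'') = f := by
    by_contra hne
    exact hYb2 (hYa2.tail (Finset.mem_erase.mpr ⟨hne, hab2⟩))
  obtain ⟨LR, hLRW, hLRA⟩ := walk_of_rtg hsuf
  -- the inner hypotheses
  have hH3in : ∀ h' ∈ M, Rch ((T.erase f).erase h') s a' ∨ Rch ((T.erase f).erase h') s t₂ := by
    intro h' hm'
    rcases H3 h' hm' with hi | hi
    · left
      obtain ⟨u, v, huv, hYu, hYv, hpre'⟩ := firstExit (Y := Y) hi hYs hn1
      have huvT : (u, v) ∈ T := (Finset.mem_erase.mp huv).2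
      have heq : (u, v) = f := by
        by_contra hne
        exact hYv (hYu.tail (Finset.mem_erase.mpr ⟨hne, huvT⟩))
      have hru : Rch ((T.erase f).erase h') s u := by
        refine FTPaux.rtg_mono (fun x y hxy => ?_) hpre'
        obtain ⟨hxy, hYy⟩ := hxy
        rw [Finset.erase_right_comm]
        refine Finset.mem_erase.mpr ⟨fun hEq => ?_, hxy⟩
        rw [← heq] at hEq
        exact hYv (((Prod.mk.injEq _ _ _ _).mp hEq).2 ▸ hYy)
      have : u = a' := by
        have := heq.trans hef.symm
        exact ((Prod.mk.injEq _ _ _ _).mp this).1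
      rwa [this] at hru
    · by_cases hc : Rch ((T.erase f).erase h') s t₂
      · right; exact hc
      · left
        obtain ⟨u, v, huv, hYu, hYv, hpre'⟩ :=
          firstExit (Y := fun w => Rch ((T.erase f).erase h') s w) hi
            Relation.ReflTransGen.refl hc
        have huvT : (u, v) ∈ T := (Finset.mem_erase.mp huv).2
        have heq : (u, v) = f := by
          by_contra hne
          refine hYv (hYu.tail ?_)
          rw [Finset.erase_right_comm]
          exact Finset.mem_erase.mpr ⟨hne, huv⟩
        have hru : Rch ((T.erase f).erase h') s u := by
          refine FTPaux.rtg_mono (fun x y hxy => ?_) hpre'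
          obtain ⟨hxy, hYy⟩ := hxy
          rw [Finset.erase_right_comm]
          refine Finset.mem_erase.mpr ⟨fun hEq => ?_, hxy⟩
          rw [← heq] at hEq
          exact hYv (((Prod.mk.injEq _ _ _ _).mp hEq).2 ▸ hYy)
        have : u = a' := by
          have := heq.trans hef.symm
          exact ((Prod.mk.injEq _ _ _ _).mp this).1
        rwa [this] at hru
  have hcard' : (T.erase f).card ≤ n := by
    rw [Finset.card_erase_of_mem hfT]
    have : 1 ≤ T.card := Finset.card_pos.mpr ⟨f, hfT⟩
    omega
  obtain ⟨U₁, U₂, hU1W, hU2W, hU1T, hU2T, hUdisj⟩ :=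
    IH (T.erase f) hcard' M s a' t₂ hH1in ht2f hH3in
  -- assemble W₁ = U₁ · (a',b') · LR
  have hb2 : b'' = b' := by
    have := hef2.trans hef.symm
    exact ((Prod.mk.injEq _ _ _ _).mp this).2
  rw [hb2] at hLRW
  have hmid : IsW a' b' [a', b'] := ⟨rfl, rfl⟩
  have g1 := append_walk hU1W hmid
  simp only [List.tail_cons] at g1
  have g2 := append_walk g1.1 hLRW
  refine ⟨(U₁ ++ [b']) ++ LR.tail, U₂, by simpa using g2.1, hU2W, ?_, ?_, ?_⟩
  · rw [g2.2, g1.2]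
    intro p hp
    simp only [Finset.mem_union] at hp
    rcases hp with (hp | hp) | hp
    · exact (Finset.erase_subset _ _) (hU1T hp)
    · simp only [arcs_pair, Finset.mem_singleton] at hp
      rw [hp, hef]; exact hfT
    · exact (hLRA p hp).1
  · exact hU2T.trans (Finset.erase_subset _ _)
  · refine tri_empty ?_
    intro p hp1 hp2 hpM
    rw [g2.2, g1.2] at hp1
    simp only [Finset.mem_union] at hp1
    rcases hp1 with (hp1 | hp1) | hp1
    · have : p ∈ arcs U₁ ∩ arcs U₂ ∩ M := by
        simp only [Finset.mem_inter]; exact ⟨⟨hp1, hp2⟩, hpM⟩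
      rw [hUdisj] at this
      exact absurd this (Finset.notMem_empty p)
    · simp only [arcs_pair, Finset.mem_singleton] at hp1
      rw [hp1, hef] at hp2
      exact (Finset.mem_erase.mp (hU2T hp2)).1 rfl
    · have h1 : ¬ Y p.1 := (hLRA p hp1).2.1
      have h2 : Y p.1 := walk_rch_to U₂ s hU2W.1
        (fun q hq => hU2T hq) (fst_mem_of_mem_pairs (mem_arcs.mp hp2))
      exact h1 h2

lemma eta_pair (p : V × V) : (p.1, p.2) = p := rfl

lemma glue {s u v t : V} {P R : List V} (hP : IsW s u P) (hR : IsW v t R) :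
    IsW s t ((P ++ [v]) ++ R.tail) ∧
      arcs ((P ++ [v]) ++ R.tail) = (arcs P ∪ {(u, v)}) ∪ arcs R := by
  have hmid : IsW u v [u, v] := ⟨rfl, rfl⟩
  have g1 := append_walk hP hmid
  simp only [List.tail_cons] at g1
  have g2 := append_walk g1.1 hR
  exact ⟨g2.1, by rw [g2.2, g1.2, arcs_pair]⟩

/-- Case B2: some pair `{f, h}` of vulnerable arcs is an `s`-`{t₁,t₂}` cut. -/
lemma caseB2 {n : ℕ}
    (IH : ∀ T' : Finset (V × V), T'.card ≤ n → ∀ M s t₁ t₂, Rch T' s t₁ → Rch T' s t₂ →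
      (∀ h ∈ M, Rch (T'.erase h) s t₁ ∨ Rch (T'.erase h) s t₂) → Sol T' M s t₁ t₂)
    {T M : Finset (V × V)} {s t₁ t₂ : V} (hcard : T.card ≤ n + 1)
    {f : V × V} (hfM : f ∈ M) (hfT : f ∈ T) (hfs : f.1 ≠ s)
    (h1 : Rch (T.erase f) s t₁) (h2 : Rch (T.erase f) s t₂)
    (H3 : ∀ h ∈ M, Rch (T.erase h) s t₁ ∨ Rch (T.erase h) s t₂)
    {h : V × V} (hhM : h ∈ M)
    (hd1 : ¬ Rch ((T.erase f).erase h) s t₁) (hd2 : ¬ Rch ((T.erase f).erase h) s t₂) :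
    Sol T M s t₁ t₂ := by
  classical
  set D := (T.erase f).erase h with hD
  have hhTf : h ∈ T.erase f := by
    by_contra hc
    have : D = T.erase f := by rw [hD, Finset.erase_eq_of_notMem hc]
    exact hd1 (this ▸ h1)
  have hhT : h ∈ T := (Finset.mem_erase.mp hhTf).2
  have hhf : h ≠ f := (Finset.mem_erase.mp hhTf).1
  have hfD : f ∉ D := by
    intro hc
    exact (Finset.mem_erase.mp (Finset.mem_erase.mp hc).2).1 rfl
  have hhD : h ∉ D := fun hc => (Finset.mem_erase.mp hc).1 rfl
  have memD : ∀ p : V × V, p ∈ T → p ≠ f → p ≠ h → p ∈ D := by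
    intro p hpT hpf hph
    rw [hD]
    exact Finset.mem_erase.mpr ⟨hph, Finset.mem_erase.mpr ⟨hpf, hpT⟩⟩
  have hYs : Rch D s s := Relation.ReflTransGen.refl
  -- all arcs of `T` crossing the reachable set are `f` or `h`
  have hcross : ∀ u v : V, (u, v) ∈ T → Rch D s u → ¬ Rch D s v →
      (u, v) = f ∨ (u, v) = h := by
    intro u v huv hYu hYv
    by_contra hne
    push_neg at hne
    exact hYv (hYu.tail (memD _ huv hne.1 hne.2))
  -- the heads of `f` and `h` are outside the reachable set
  have hbY : ¬ Rch D s f.2 := by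
    intro hb
    have stay : ∀ t', ¬ Rch D s t' → ¬ Rch (T.erase h) s t' := by
      intro t' ht' hi
      refine ht' (rch_stay hi ?_ hYs)
      intro x y hxy hx
      by_cases hxf : (x, y) = f
      · exact ((Prod.mk.injEq _ _ _ _).mp hxf).2 ▸ hb
      · exact hx.tail (memD _ (Finset.mem_erase.mp hxy).2 hxf (Finset.mem_erase.mp hxy).1)
    rcases H3 h hhM with hi | hi
    · exact stay t₁ hd1 hi
    · exact stay t₂ hd2 hi
  have hdY : ¬ Rch D s h.2 := by
    intro hdm
    refine hd2 (rch_stay h2 ?_ hYs)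
    intro x y hxy hx
    by_cases hxh : (x, y) = h
    · exact ((Prod.mk.injEq _ _ _ _).mp hxh).2 ▸ hdm
    · exact hx.tail (memD _ (Finset.mem_erase.mp hxy).2 (Finset.mem_erase.mp hxy).1 hxh)
  -- the tail of `h` is reachable (via a walk witnessing h1, which must use h)
  have hYh1 : Rch D s h.1 := by
    obtain ⟨u, v, huv, hYu, hYv, hpre⟩ :=
      firstExit (Y := fun w => Rch D s w) h1 hYs hd1
    have heq : (u, v) = h := by
      rcases hcross u v (Finset.mem_erase.mp huv).2 hYu hYv with hq | hq
      · exact absurd ((Prod.mk.injEq _ _ _ _).mp hq).1.symm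
          (by intro hc; exact (Finset.mem_erase.mp huv).1 (Prod.ext hc.symm
            ((Prod.mk.injEq _ _ _ _).mp hq).2) )
      · exact hq
    have : Rch D s u := by
      refine FTPaux.rtg_mono (fun x y hxy => ?_) hpre
      obtain ⟨hxy, hYy⟩ := hxy
      refine memD _ (Finset.mem_erase.mp hxy).2 ?_ ?_
      · intro hc; exact hbY (((Prod.mk.injEq _ _ _ _).mp hc).2 ▸ hYy)
      · intro hc; exact hdY (((Prod.mk.injEq _ _ _ _).mp hc).2 ▸ hYy)
    exact ((Prod.mk.injEq _ _ _ _).mp heq).1 ▸ this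
  -- the tail of `f` is reachable
  have hYf1' : ∀ t', ¬ Rch D s t' → Rch (T.erase h) s t' → Rch D s f.1 := by
    intro t' ht' hi
    obtain ⟨u, v, huv, hYu, hYv, hpre⟩ :=
      firstExit (Y := fun w => Rch D s w) hi hYs ht'
    have heq : (u, v) = f := by
      rcases hcross u v (Finset.mem_erase.mp huv).2 hYu hYv with hq | hq
      · exact hq
      · exact absurd hq (Finset.mem_erase.mp huv).1
    have : Rch D s u := by
      refine FTPaux.rtg_mono (fun x y hxy => ?_) hpre
      obtain ⟨hxy, hYy⟩ := hxy
      refine memD _ (Finset.mem_erase.mp hxy).2 ?_ ?_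
      · intro hc; exact hbY (((Prod.mk.injEq _ _ _ _).mp hc).2 ▸ hYy)
      · intro hc; exact hdY (((Prod.mk.injEq _ _ _ _).mp hc).2 ▸ hYy)
    exact ((Prod.mk.injEq _ _ _ _).mp heq).1 ▸ this
  have hYf1 : Rch D s f.1 := by
    rcases H3 h hhM with hi | hi
    · exact hYf1' t₁ hd1 hi
    · exact hYf1' t₂ hd2 hi
  -- inner problem hypotheses
  have hinH : ∀ (h' : V × V) t', ¬ Rch D s t' → Rch (T.erase h') s t' →
      Rch (D.erase h') s f.1 ∨ Rch (D.erase h') s h.1 := by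
    intro h' t' ht' hi
    obtain ⟨u, v, huv, hYu, hYv, hpre⟩ :=
      firstExit (Y := fun w => Rch D s w) hi hYs ht'
    have hprefix : Rch (D.erase h') s u := by
      refine FTPaux.rtg_mono (fun x y hxy => ?_) hpre
      obtain ⟨hxy, hYy⟩ := hxy
      refine Finset.mem_erase.mpr ⟨(Finset.mem_erase.mp hxy).1,
        memD _ (Finset.mem_erase.mp hxy).2 ?_ ?_⟩
      · intro hc; exact hbY (((Prod.mk.injEq _ _ _ _).mp hc).2 ▸ hYy)
      · intro hc; exact hdY (((Prod.mk.injEq _ _ _ _).mp hc).2 ▸ hYy)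
    rcases hcross u v (Finset.mem_erase.mp huv).2 hYu hYv with hq | hq
    · exact Or.inl (((Prod.mk.injEq _ _ _ _).mp hq).1 ▸ hprefix)
    · exact Or.inr (((Prod.mk.injEq _ _ _ _).mp hq).1 ▸ hprefix)
  have hH3in : ∀ h' ∈ M, Rch (D.erase h') s f.1 ∨ Rch (D.erase h') s h.1 := by
    intro h' hm'
    rcases H3 h' hm' with hi | hi
    · exact hinH h' t₁ hd1 hi
    · exact hinH h' t₂ hd2 hi
  have hcardTf : (T.erase f).card = T.card - 1 := Finset.card_erase_of_mem hfT
  have hcardD : D.card = (T.erase f).card - 1 := Finset.card_erase_of_mem hhTf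
  have hTfpos : 1 ≤ (T.erase f).card := Finset.card_pos.mpr ⟨h, hhTf⟩
  have hcardD' : D.card ≤ n := by
    have := Finset.card_erase_le (s := T.erase f) (a := h)
    omega
  obtain ⟨U₁, U₂, hU1W, hU2W, hU1T, hU2T, hUdisj⟩ :=
    IH D hcardD' M s f.1 h.1 hYf1 hYh1 hH3in
  -- tails of arcs of the inner walks are reachable
  have hUY : ∀ (U : List V), arcs U ⊆ D → ∀ p ∈ arcs U, (U.head? = some s) →
      Rch D s p.1 := by
    intro U hUT p hp hh
    exact walk_rch_to U s hh (fun q hq => hUT hq) (fst_mem_of_mem_pairs (mem_arcs.mp hp))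
  -- outer suffix extraction
  have hout : ∀ (h' : V × V) t', ¬ Rch D s t' → Rch (T.erase h') s t' →
      ∃ w, (w = f.2 ∨ w = h.2) ∧
        Relation.ReflTransGen
          (fun x y => (x, y) ∈ D ∧ ¬ Rch D s x ∧ ¬ Rch D s y ∧ (x, y) ≠ h') w t' := by
    intro h' t' ht' hi
    obtain ⟨u, v, huv, hYu, hYv, hsuf⟩ :=
      outTail (Y := fun w => Rch D s w) hi hYs ht'
    refine ⟨v, ?_, ?_⟩
    · rcases hcross u v (Finset.mem_erase.mp huv).2 hYu hYv with hq | hq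
      · exact Or.inl ((Prod.mk.injEq _ _ _ _).mp hq).2
      · exact Or.inr ((Prod.mk.injEq _ _ _ _).mp hq).2
    · refine FTPaux.rtg_mono (fun x y hxy => ?_) hsuf
      obtain ⟨hxy, hnx, hny⟩ := hxy
      refine ⟨memD _ (Finset.mem_erase.mp hxy).2 ?_ ?_, hnx, hny, (Finset.mem_erase.mp hxy).1⟩
      · intro hc; exact hnx (((Prod.mk.injEq _ _ _ _).mp hc).1 ▸ hYf1)
      · intro hc; exact hnx (((Prod.mk.injEq _ _ _ _).mp hc).1 ▸ hYh1)

  have hDT : D ⊆ T := by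
    rw [hD]
    exact (Finset.erase_subset _ _).trans (Finset.erase_subset _ _)
  have hY1 : ∀ q ∈ arcs U₁, Rch D s q.1 := fun q hq =>
    walk_rch_to U₁ s hU1W.1 (fun r hr => hU1T hr) (fst_mem_of_mem_pairs (mem_arcs.mp hq))
  have hY2 : ∀ q ∈ arcs U₂, Rch D s q.1 := fun q hq =>
    walk_rch_to U₂ s hU2W.1 (fun r hr => hU2T hr) (fst_mem_of_mem_pairs (mem_arcs.mp hq))
  by_cases hbd : f.2 = h.2
  · -- the two cut arcs share their head
    have hRo1 : Rch D f.2 t₁ := by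
      obtain ⟨w, hw, hsuf⟩ := hout f t₁ hd1 h1
      have hsD : Rch D w t₁ := FTPaux.rtg_mono (fun x y hxy => hxy.1) hsuf
      rcases hw with rfl | hw2
      · exact hsD
      · rw [hbd, ← hw2]; exact hsD
    have hRo2 : Rch D f.2 t₂ := by
      obtain ⟨w, hw, hsuf⟩ := hout f t₂ hd2 h2
      have hsD : Rch D w t₂ := FTPaux.rtg_mono (fun x y hxy => hxy.1) hsuf
      rcases hw with rfl | hw2
      · exact hsD
      · rw [hbd, ← hw2]; exact hsD
    have hH3out : ∀ h' ∈ M, Rch (D.erase h') f.2 t₁ ∨ Rch (D.erase h') f.2 t₂ := by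
      intro h' hm'
      have main : ∀ t', ¬ Rch D s t' → Rch (T.erase h') s t' → Rch (D.erase h') f.2 t' := by
        intro t' ht' hi
        obtain ⟨w, hw, hsuf⟩ := hout h' t' ht' hi
        have hsD : Rch (D.erase h') w t' := FTPaux.rtg_mono
          (fun x y hxy => Finset.mem_erase.mpr ⟨hxy.2.2.2, hxy.1⟩) hsuf
        rcases hw with rfl | hw2
        · exact hsD
        · rw [hbd, ← hw2]; exact hsD
      rcases H3 h' hm' with hi | hi
      · exact Or.inl (main t₁ hd1 hi)
      · exact Or.inr (main t₂ hd2 hi)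
    obtain ⟨R₁, R₂, hR1W, hR2W, hR1T, hR2T, hRdisj⟩ :=
      IH D hcardD' M f.2 t₁ t₂ hRo1 hRo2 hH3out
    have hnY1 : ∀ q ∈ arcs R₁, ¬ Rch D s q.1 := by
      intro q hq hYq
      have := walk_rch_from (r := fun x y => (x, y) ∈ D) R₁ q.1 hR1W.2
        (fun q' hq' => hR1T hq') (fst_mem_of_mem_pairs (mem_arcs.mp hq))
      exact hd1 (hYq.trans this)
    have hnY2 : ∀ q ∈ arcs R₂, ¬ Rch D s q.1 := by
      intro q hq hYq
      have := walk_rch_from (r := fun x y => (x, y) ∈ D) R₂ q.1 hR2W.2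
        (fun q' hq' => hR2T hq') (fst_mem_of_mem_pairs (mem_arcs.mp hq))
      exact hd2 (hYq.trans this)
    have hR2W' : IsW h.2 t₂ R₂ := hbd ▸ hR2W
    have g1 := glue hU1W hR1W
    have g2 := glue hU2W hR2W'
    refine ⟨_, _, g1.1, g2.1, ?_, ?_, ?_⟩
    · rw [g1.2]
      intro p hp
      simp only [Finset.mem_union, Finset.mem_singleton] at hp
      rcases hp with (hp | rfl) | hp
      · exact hDT (hU1T hp)
      · exact hfT
      · exact hDT (hR1T hp)
    · rw [g2.2]
      intro p hp
      simp only [Finset.mem_union, Finset.mem_singleton] at hp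
      rcases hp with (hp | rfl) | hp
      · exact hDT (hU2T hp)
      · exact hhT
      · exact hDT (hR2T hp)
    · refine tri_empty ?_
      intro p hp1 hp2 hpM
      rw [g1.2] at hp1
      rw [g2.2] at hp2
      simp only [Finset.mem_union, Finset.mem_singleton] at hp1 hp2
      rcases hp1 with (hp1 | rfl) | hp1
      · rcases hp2 with (hp2 | heq) | hp2
        · exact absurd (Finset.mem_inter.mpr ⟨Finset.mem_inter.mpr ⟨hp1, hp2⟩, hpM⟩)
            (by rw [hUdisj]; exact Finset.notMem_empty p)
        · exact hhD ((heq.trans (eta_pair h)) ▸ hU1T hp1)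
        · exact hnY2 p hp2 (hY1 p hp1)
      · rcases hp2 with (hp2 | heq) | hp2
        · exact hfD (hU2T hp2)
        · exact hhf ((eta_pair h) ▸ (eta_pair f) ▸ heq.symm)
        · exact hfD (hR2T hp2)
      · rcases hp2 with (hp2 | heq) | hp2
        · exact hnY1 p hp1 (hY2 p hp2)
        · exact hhD ((heq.trans (eta_pair h)) ▸ hR1T hp1)
        · exact absurd (Finset.mem_inter.mpr ⟨Finset.mem_inter.mpr ⟨hp1, hp2⟩, hpM⟩)
            (by rw [hRdisj]; exact Finset.notMem_empty p)
  · -- the two cut arcs have distinct heads: contract the reachable side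
    haveI : DecidablePred (fun p : V × V => ¬ Rch D s p.1 ∧ ¬ Rch D s p.2) :=
      fun _ => Classical.propDecidable _
    set Fo := D.filter (fun p : V × V => ¬ Rch D s p.1 ∧ ¬ Rch D s p.2) with hFo
    set To := insert (s, f.2) (insert (s, h.2) Fo) with hTo
    set Mo := insert (s, f.2) (insert (s, h.2) M) with hMo
    have hFoD : Fo ⊆ D := Finset.filter_subset _ _
    have hmemFo : ∀ p : V × V, p ∈ Fo ↔ p ∈ D ∧ ¬ Rch D s p.1 ∧ ¬ Rch D s p.2 := by
      intro p
      rw [hFo]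
      simp [Finset.mem_filter]
  -- card bound via an arc entering f.1
    obtain ⟨c₀, -, he₀⟩ : ∃ c, Relation.ReflTransGen (fun x y => (x, y) ∈ D) s c ∧
        (c, f.1) ∈ D := by
      rcases Relation.ReflTransGen.cases_tail hYf1 with hq | hq
      · exact absurd hq hfs
      · exact hq
    have hFosub : Fo ⊆ D.erase (c₀, f.1) := by
      intro p hp
      rw [hmemFo] at hp
      refine Finset.mem_erase.mpr ⟨?_, hp.1⟩
      intro hc
      exact hp.2.2 (by rw [hc]; exact hYf1)
    have hcardTo : To.card ≤ n := by
      have h1c : Fo.card ≤ (D.erase (c₀, f.1)).card := Finset.card_le_card hFosub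
      have h2c : (D.erase (c₀, f.1)).card = D.card - 1 := Finset.card_erase_of_mem he₀
      have h3c : To.card ≤ (insert (s, h.2) Fo).card + 1 := by
        rw [hTo]; exact Finset.card_insert_le _ _
      have h4c : (insert (s, h.2) Fo).card ≤ Fo.card + 1 := Finset.card_insert_le _ _
      have h5c : 1 ≤ D.card := Finset.card_pos.mpr ⟨_, he₀⟩
      omega
    have hTo_mem_fb : (s, f.2) ∈ To := Finset.mem_insert_self _ _
    have hTo_mem_hb : (s, h.2) ∈ To := Finset.mem_insert_of_mem (Finset.mem_insert_self _ _)
    have hFoTo : Fo ⊆ To := fun p hp => Finset.mem_insert_of_mem (Finset.mem_insert_of_mem hp)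
    have hfb2ne : ((s, f.2) : V × V) ≠ (s, h.2) := by
      intro hc
      exact hbd ((Prod.mk.injEq _ _ _ _).mp hc).2
    have hFo_ne_s : ∀ p ∈ Fo, p.1 ≠ s := by
      intro p hp hc
      exact ((hmemFo p).mp hp).2.1 (hc ▸ hYs)
    -- suffixes of surviving walks, within Fo
    have hsufFo : ∀ (h' : V × V) t', ¬ Rch D s t' → Rch (T.erase h') s t' →
        ∃ w, (w = f.2 ∨ w = h.2) ∧
          Relation.ReflTransGen (fun x y => (x, y) ∈ Fo ∧ (x, y) ≠ h') w t' := by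
      intro h' t' ht' hi
      obtain ⟨w, hw, hsuf⟩ := hout h' t' ht' hi
      exact ⟨w, hw, FTPaux.rtg_mono (fun x y hxy =>
        ⟨(hmemFo _).mpr ⟨hxy.1, hxy.2.1, hxy.2.2.1⟩, hxy.2.2.2⟩) hsuf⟩
    -- walks avoiding f must cross via h
    have houtF : ∀ t', ¬ Rch D s t' → Rch (T.erase f) s t' →
        Relation.ReflTransGen (fun x y => (x, y) ∈ Fo) h.2 t' := by
      intro t' ht' hi
      obtain ⟨u, v, huv, hYu, hYv, hsuf⟩ :=
        outTail (Y := fun w => Rch D s w) hi hYs ht'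
      have heq : (u, v) = h := by
        rcases hcross u v (Finset.mem_erase.mp huv).2 hYu hYv with hq | hq
        · exact absurd hq (Finset.mem_erase.mp huv).1
        · exact hq
      have hsD : Relation.ReflTransGen (fun x y => (x, y) ∈ Fo) v t' := by
        refine FTPaux.rtg_mono (fun x y hxy => ?_) hsuf
        obtain ⟨hxy, hnx, hny⟩ := hxy
        refine (hmemFo _).mpr ⟨memD _ (Finset.mem_erase.mp hxy).2 (Finset.mem_erase.mp hxy).1 ?_, hnx, hny⟩
        intro hc
        exact hnx (((Prod.mk.injEq _ _ _ _).mp hc).1 ▸ hYh1)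
      exact ((Prod.mk.injEq _ _ _ _).mp heq).2 ▸ hsD
    -- walks avoiding h must cross via f
    have houtH : ∀ t', ¬ Rch D s t' → Rch (T.erase h) s t' →
        Relation.ReflTransGen (fun x y => (x, y) ∈ Fo) f.2 t' := by
      intro t' ht' hi
      obtain ⟨u, v, huv, hYu, hYv, hsuf⟩ :=
        outTail (Y := fun w => Rch D s w) hi hYs ht'
      have heq : (u, v) = f := by
        rcases hcross u v (Finset.mem_erase.mp huv).2 hYu hYv with hq | hq
        · exact hq
        · exact absurd hq (Finset.mem_erase.mp huv).1
      have hsD : Relation.ReflTransGen (fun x y => (x, y) ∈ Fo) v t' := by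
        refine FTPaux.rtg_mono (fun x y hxy => ?_) hsuf
        obtain ⟨hxy, hnx, hny⟩ := hxy
        refine (hmemFo _).mpr ⟨memD _ (Finset.mem_erase.mp hxy).2 ?_ (Finset.mem_erase.mp hxy).1, hnx, hny⟩
        intro hc
        exact hnx (((Prod.mk.injEq _ _ _ _).mp hc).1 ▸ hYf1)
      exact ((Prod.mk.injEq _ _ _ _).mp heq).2 ▸ hsD
    have hW1out : Rch To s t₁ :=
      Relation.ReflTransGen.head hTo_mem_hb
        (FTPaux.rtg_mono (fun x y hxy => hFoTo hxy) (houtF t₁ hd1 h1))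
    have hW2out : Rch To s t₂ :=
      Relation.ReflTransGen.head hTo_mem_hb
        (FTPaux.rtg_mono (fun x y hxy => hFoTo hxy) (houtF t₂ hd2 h2))
    have hH3out : ∀ h' ∈ Mo, Rch (To.erase h') s t₁ ∨ Rch (To.erase h') s t₂ := by
      intro h' hm'
      by_cases e1 : h' = (s, f.2)
      · subst e1
        left
        refine Relation.ReflTransGen.head
          (Finset.mem_erase.mpr ⟨fun hc => hfb2ne hc.symm, hTo_mem_hb⟩) ?_
        refine FTPaux.rtg_mono (fun x y hxy => ?_) (houtF t₁ hd1 h1)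
        exact Finset.mem_erase.mpr ⟨fun hc => hFo_ne_s _ hxy (by rw [hc]), hFoTo hxy⟩
      · by_cases e2 : h' = (s, h.2)
        · subst e2
          have main : ∀ t', ¬ Rch D s t' → Rch (T.erase h) s t' →
              Rch (To.erase (s, h.2)) s t' := by
            intro t' ht' hi
            refine Relation.ReflTransGen.head
              (Finset.mem_erase.mpr ⟨hfb2ne, hTo_mem_fb⟩) ?_
            refine FTPaux.rtg_mono (fun x y hxy => ?_) (houtH t' ht' hi)
            exact Finset.mem_erase.mpr ⟨fun hc => hFo_ne_s _ hxy (by rw [hc]), hFoTo hxy⟩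
          rcases H3 h hhM with hi | hi
          · exact Or.inl (main t₁ hd1 hi)
          · exact Or.inr (main t₂ hd2 hi)
        · have hm'' : h' ∈ M := by
            rcases Finset.mem_insert.mp hm' with hq | hq
            · exact absurd hq e1
            · rcases Finset.mem_insert.mp hq with hq' | hq'
              · exact absurd hq' e2
              · exact hq'
          have main : ∀ t', ¬ Rch D s t' → Rch (T.erase h') s t' → Rch (To.erase h') s t' := by
            intro t' ht' hi
            obtain ⟨w, hw, hsuf⟩ := hsufFo h' t' ht' hi
            have hs' : Rch (To.erase h') w t' := FTPaux.rtg_mono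
              (fun x y hxy => Finset.mem_erase.mpr ⟨hxy.2, hFoTo hxy.1⟩) hsuf
            rcases hw with rfl | rfl
            · exact Relation.ReflTransGen.head
                (Finset.mem_erase.mpr ⟨fun hc => e1 hc.symm, hTo_mem_fb⟩) hs'
            · exact Relation.ReflTransGen.head
                (Finset.mem_erase.mpr ⟨fun hc => e2 hc.symm, hTo_mem_hb⟩) hs'
          rcases H3 h' hm'' with hi | hi
          · exact Or.inl (main t₁ hd1 hi)
          · exact Or.inr (main t₂ hd2 hi)
    obtain ⟨Lo₁, Lo₂, hLo1W, hLo2W, hLo1T, hLo2T, hLodisj⟩ :=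
      IH To hcardTo Mo s t₁ t₂ hW1out hW2out hH3out
    have hTo_no_s : ∀ x y : V, (x, y) ∈ To → y ≠ s := by
      intro x y hxy
      rcases Finset.mem_insert.mp hxy with hq | hq
      · have hy : y = f.2 := ((Prod.mk.injEq _ _ _ _).mp hq).2
        intro hc
        apply hbY
        rw [← hy, hc]
        exact hYs
      · rcases Finset.mem_insert.mp hq with hq' | hq'
        · have hy : y = h.2 := ((Prod.mk.injEq _ _ _ _).mp hq').2
          intro hc
          apply hdY
          rw [← hy, hc]
          exact hYs
        · intro hc
          exact ((hmemFo _).mp hq').2.2 (hc ▸ hYs)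
    have ht1s : t₁ ≠ s := fun hc => hd1 (hc ▸ hYs)
    have ht2s : t₂ ≠ s := fun hc => hd2 (hc ▸ hYs)
    obtain ⟨x₁, L₁', hL1W, hrx1, harcs1, htl1⟩ :=
      decompose_start (r := fun x y => (x, y) ∈ To) hLo1W (fun p hp => hLo1T hp)
        hTo_no_s ht1s
    obtain ⟨x₂, L₂', hL2W, hrx2, harcs2, htl2⟩ :=
      decompose_start (r := fun x y => (x, y) ∈ To) hLo2W (fun p hp => hLo2T hp)
        hTo_no_s ht2s
    have hx1 : x₁ = f.2 ∨ x₁ = h.2 := by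
      rcases Finset.mem_insert.mp hrx1 with hq | hq
      · exact Or.inl ((Prod.mk.injEq _ _ _ _).mp hq).2
      · rcases Finset.mem_insert.mp hq with hq' | hq'
        · exact Or.inr ((Prod.mk.injEq _ _ _ _).mp hq').2
        · exact absurd rfl (hFo_ne_s _ hq')
    have hx2 : x₂ = f.2 ∨ x₂ = h.2 := by
      rcases Finset.mem_insert.mp hrx2 with hq | hq
      · exact Or.inl ((Prod.mk.injEq _ _ _ _).mp hq).2
      · rcases Finset.mem_insert.mp hq with hq' | hq'
        · exact Or.inr ((Prod.mk.injEq _ _ _ _).mp hq').2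
        · exact absurd rfl (hFo_ne_s _ hq')
    have hL1Fo : arcs L₁' ⊆ Fo := by
      intro p hp
      have hpTo : p ∈ To := hLo1T (by rw [harcs1]; exact Finset.mem_insert_of_mem hp)
      rcases Finset.mem_insert.mp hpTo with hq | hq
      · exact absurd (by rw [hq]) (htl1 p hp)
      · rcases Finset.mem_insert.mp hq with hq' | hq'
        · exact absurd (by rw [hq']) (htl1 p hp)
        · exact hq'
    have hL2Fo : arcs L₂' ⊆ Fo := by
      intro p hp
      have hpTo : p ∈ To := hLo2T (by rw [harcs2]; exact Finset.mem_insert_of_mem hp)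
      rcases Finset.mem_insert.mp hpTo with hq | hq
      · exact absurd (by rw [hq]) (htl2 p hp)
      · rcases Finset.mem_insert.mp hq with hq' | hq'
        · exact absurd (by rw [hq']) (htl2 p hp)
        · exact hq'
    have hx12 : x₁ ≠ x₂ := by
      intro hc
      have hM1 : (s, x₁) ∈ Mo := by
        rcases hx1 with rfl | rfl
        · exact Finset.mem_insert_self _ _
        · exact Finset.mem_insert_of_mem (Finset.mem_insert_self _ _)
      have hmem : (s, x₁) ∈ arcs Lo₁ ∩ arcs Lo₂ ∩ Mo := by
        refine Finset.mem_inter.mpr ⟨Finset.mem_inter.mpr ⟨?_, ?_⟩, hM1⟩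
        · rw [harcs1]; exact Finset.mem_insert_self _ _
        · rw [harcs2, hc]; exact Finset.mem_insert_self _ _
      rw [hLodisj] at hmem
      exact Finset.notMem_empty _ hmem
    have hLL : ∀ p : V × V, p ∈ arcs L₁' → p ∈ arcs L₂' → p ∈ M → False := by
      intro p hp1 hp2 hpM
      have hmem : p ∈ arcs Lo₁ ∩ arcs Lo₂ ∩ Mo := by
        refine Finset.mem_inter.mpr ⟨Finset.mem_inter.mpr ⟨?_, ?_⟩, ?_⟩
        · rw [harcs1]; exact Finset.mem_insert_of_mem hp1
        · rw [harcs2]; exact Finset.mem_insert_of_mem hp2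
        · exact Finset.mem_insert_of_mem (Finset.mem_insert_of_mem hpM)
      rw [hLodisj] at hmem
      exact Finset.notMem_empty _ hmem
    have hnYFo : ∀ q : V × V, q ∈ Fo → ¬ Rch D s q.1 := fun q hq => ((hmemFo q).mp hq).2.1
    rcases hx1 with rfl | rfl
    · -- x₁ = f.2, so x₂ = h.2
      have hx2' : x₂ = h.2 := by
        rcases hx2 with hq | hq
        · exact absurd hq.symm hx12
        · exact hq
      subst hx2'
      have g1 := glue hU1W hL1W
      have g2 := glue hU2W hL2W
      refine ⟨_, _, g1.1, g2.1, ?_, ?_, ?_⟩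
      · rw [g1.2]
        intro p hp
        simp only [Finset.mem_union, Finset.mem_singleton] at hp
        rcases hp with (hp | rfl) | hp
        · exact hDT (hU1T hp)
        · exact hfT
        · exact hDT (hFoD (hL1Fo hp))
      · rw [g2.2]
        intro p hp
        simp only [Finset.mem_union, Finset.mem_singleton] at hp
        rcases hp with (hp | rfl) | hp
        · exact hDT (hU2T hp)
        · exact hhT
        · exact hDT (hFoD (hL2Fo hp))
      · refine tri_empty ?_
        intro p hp1 hp2 hpM
        rw [g1.2] at hp1
        rw [g2.2] at hp2
        simp only [Finset.mem_union, Finset.mem_singleton] at hp1 hp2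
        rcases hp1 with (hp1 | rfl) | hp1
        · rcases hp2 with (hp2 | heq) | hp2
          · exact absurd (Finset.mem_inter.mpr ⟨Finset.mem_inter.mpr ⟨hp1, hp2⟩, hpM⟩)
              (by rw [hUdisj]; exact Finset.notMem_empty p)
          · exact hhD ((heq.trans (eta_pair h)) ▸ hU1T hp1)
          · exact hnYFo p (hL2Fo hp2) (hY1 p hp1)
        · rcases hp2 with (hp2 | heq) | hp2
          · exact hfD (hU2T hp2)
          · exact hhf ((eta_pair h) ▸ (eta_pair f) ▸ heq.symm)
          · exact hfD (hFoD (hL2Fo hp2))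
        · rcases hp2 with (hp2 | heq) | hp2
          · exact hnYFo p (hL1Fo hp1) (hY2 p hp2)
          · exact hhD ((heq.trans (eta_pair h)) ▸ (hFoD (hL1Fo hp1)))
          · exact hLL p hp1 hp2 hpM
    · -- x₁ = h.2, so x₂ = f.2
      have hx2' : x₂ = f.2 := by
        rcases hx2 with hq | hq
        · exact hq
        · exact absurd hq.symm hx12
      subst hx2'
      have g1 := glue hU2W hL1W
      have g2 := glue hU1W hL2W
      refine ⟨_, _, g1.1, g2.1, ?_, ?_, ?_⟩
      · rw [g1.2]
        intro p hp
        simp only [Finset.mem_union, Finset.mem_singleton] at hp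
        rcases hp with (hp | rfl) | hp
        · exact hDT (hU2T hp)
        · exact hhT
        · exact hDT (hFoD (hL1Fo hp))
      · rw [g2.2]
        intro p hp
        simp only [Finset.mem_union, Finset.mem_singleton] at hp
        rcases hp with (hp | rfl) | hp
        · exact hDT (hU1T hp)
        · exact hfT
        · exact hDT (hFoD (hL2Fo hp))
      · refine tri_empty ?_
        intro p hp1 hp2 hpM
        rw [g1.2] at hp1
        rw [g2.2] at hp2
        simp only [Finset.mem_union, Finset.mem_singleton] at hp1 hp2
        rcases hp1 with (hp1 | rfl) | hp1
        · rcases hp2 with (hp2 | heq) | hp2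
          · exact absurd (Finset.mem_inter.mpr ⟨Finset.mem_inter.mpr ⟨hp2, hp1⟩, hpM⟩)
              (by rw [hUdisj]; exact Finset.notMem_empty p)
          · exact hfD ((heq.trans (eta_pair f)) ▸ hU2T hp1)
          · exact hnYFo p (hL2Fo hp2) (hY2 p hp1)
        · rcases hp2 with (hp2 | heq) | hp2
          · exact hhD (hU1T hp2)
          · exact hhf ((eta_pair h) ▸ (eta_pair f) ▸ heq)
          · exact hhD (hFoD (hL2Fo hp2))
        · rcases hp2 with (hp2 | heq) | hp2
          · exact hnYFo p (hL1Fo hp1) (hY1 p hp2)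
          · exact hfD ((heq.trans (eta_pair f)) ▸ (hFoD (hL1Fo hp1)))
          · exact hLL p hp1 hp2 hpM


theorem key : ∀ (n : ℕ) (T : Finset (V × V)), T.card ≤ n →
    ∀ (M : Finset (V × V)) (s t₁ t₂ : V), Rch T s t₁ → Rch T s t₂ →
    (∀ h ∈ M, Rch (T.erase h) s t₁ ∨ Rch (T.erase h) s t₂) →
    Sol T M s t₁ t₂ := by
  intro n
  induction n with
  | zero =>
    intro T hT M s t₁ t₂ H1 H2 H3
    have hTe : T = ∅ := Finset.card_eq_zero.mp (Nat.le_zero.mp hT)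
    subst hTe
    have h1 : s = t₁ := rch_eq_of_empty H1 (by simp)
    have h2 : s = t₂ := rch_eq_of_empty H2 (by simp)
    subst h1
    subst h2
    exact ⟨[s], [s], ⟨rfl, rfl⟩, ⟨rfl, rfl⟩, by simp, by simp, by simp⟩
  | succ n IH =>
    intro T hT M s t₁ t₂ H1 H2 H3
    by_cases hex : ∃ f, f ∈ M ∧ f ∈ T ∧ f.1 ≠ s
    · obtain ⟨f, hfM, hfT, hfs⟩ := hex
      by_cases h1 : Rch (T.erase f) s t₁
      · by_cases h2 : Rch (T.erase f) s t₂
        · by_cases h3 : ∀ h ∈ M, Rch ((T.erase f).erase h) s t₁ ∨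
              Rch ((T.erase f).erase h) s t₂
          · -- case A : recurse on T.erase f
            have hcard' : (T.erase f).card ≤ n := by
              rw [Finset.card_erase_of_mem hfT]
              have : 1 ≤ T.card := Finset.card_pos.mpr ⟨f, hfT⟩
              omega
            obtain ⟨L₁, L₂, a, b, c, d, e⟩ := IH (T.erase f) hcard' M s t₁ t₂ h1 h2 h3
            exact ⟨L₁, L₂, a, b, c.trans (Finset.erase_subset _ _),
              d.trans (Finset.erase_subset _ _), e⟩
          · -- case B2
            push_neg at h3
            obtain ⟨h, hhM, hd1, hd2⟩ := h3
            exact caseB2 IH hT hfM hfT hfs h1 h2 H3 hhM hd1 hd2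
        · -- case B1' : swap the sinks
          obtain ⟨L₁, L₂, a, b, c, d, e⟩ := caseB1 IH hT hfM hfT H2 H1
            (fun h hm => (H3 h hm).symm) h2
          exact ⟨L₂, L₁, b, a, d, c, by
            rw [Finset.inter_comm (arcs L₂) (arcs L₁)]; exact e⟩
      · -- case B1
        exact caseB1 IH hT hfM hfT H1 H2 H3 h1
    · -- all vulnerable arcs of T leave s
      push_neg at hex
      obtain ⟨L1w, hL1W, hL1A⟩ := walk_of_rtg H1
      obtain ⟨P₁, hP1W, hP1nd, hP1a⟩ := simplify hL1W
      obtain ⟨L2w, hL2W, hL2A⟩ := walk_of_rtg H2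
      obtain ⟨P₂, hP2W, hP2nd, hP2a⟩ := simplify hL2W
      have hP1T : arcs P₁ ⊆ T := fun p hp => hL1A p (hP1a hp)
      have hP2T : arcs P₂ ⊆ T := fun p hp => hL2A p (hP2a hp)
      by_cases hdisj : arcs P₁ ∩ arcs P₂ ∩ M = ∅
      · exact ⟨P₁, P₂, hP1W, hP2W, hP1T, hP2T, hdisj⟩
      · obtain ⟨z, hz⟩ := Finset.nonempty_iff_ne_empty.mpr hdisj
        simp only [Finset.mem_inter] at hz
        obtain ⟨⟨hz1, hz2⟩, hzM⟩ := hz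
        have hzT : z ∈ T := hP1T hz1
        have hzs : z.1 = s := hex z hzM hzT
        rcases H3 z hzM with hi | hi
        · obtain ⟨Qw, hQW, hQA⟩ := walk_of_rtg hi
          obtain ⟨Q, hQW', hQnd, hQa⟩ := simplify hQW
          refine ⟨Q, P₂, hQW', hP2W, ?_, hP2T, tri_empty ?_⟩
          · intro p hp
            exact Finset.erase_subset _ _ (hQA p (hQa hp))
          · intro p hp1 hp2 hpM
            have hpT : p ∈ T.erase z := hQA p (hQa hp1)
            have hps : p.1 = s := hex p hpM (Finset.mem_erase.mp hpT).2
            have hpz : p = z := arc_tail_inj hP2nd hp2 hz2 (by rw [hps, hzs])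
            exact (Finset.mem_erase.mp hpT).1 hpz
        · obtain ⟨Qw, hQW, hQA⟩ := walk_of_rtg hi
          obtain ⟨Q, hQW', hQnd, hQa⟩ := simplify hQW
          refine ⟨P₁, Q, hP1W, hQW', hP1T, ?_, tri_empty ?_⟩
          · intro p hp
            exact Finset.erase_subset _ _ (hQA p (hQa hp))
          · intro p hp1 hp2 hpM
            have hpT : p ∈ T.erase z := hQA p (hQa hp2)
            have hps : p.1 = s := hex p hpM (Finset.mem_erase.mp hpT).2
            have hpz : p = z := arc_tail_inj hP1nd hp1 hz1 (by rw [hps, hzs])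
            exact (Finset.mem_erase.mp hpT).1 hpz

end FTPaux

/-- `P` is the arc set of a directed `s`-`t` path: there is a list of distinct vertices
starting at `s` and ending at `t` whose set of consecutive pairs is exactly `P`. -/
def IsPathArcs {V : Type*} [DecidableEq V] (s t : V) (P : Finset (V × V)) : Prop :=
  ∃ L : List V, L.head? = some s ∧ L.getLast? = some t ∧ L.Nodup ∧
    P = (L.zip L.tail).toFinset

/-- Every feasible FTP solution for `k = 1` contains a robust `s`-`t` bipath:
two directed `s`-`t` paths sharing no vulnerable arc. -/
theorem stmt4 {V : Type*} [DecidableEq V] (A M Sstar : Finset (V × V)) (s t : V)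
    (hMA : M ⊆ A) (hSA : Sstar ⊆ A)
    (hfeas : ftpFeasible Sstar M s t 1) :
    ∃ P₁ P₂ : Finset (V × V), P₁ ⊆ Sstar ∧ P₂ ⊆ Sstar ∧
      IsPathArcs s t P₁ ∧ IsPathArcs s t P₂ ∧ P₁ ∩ P₂ ∩ M = ∅ := by
  classical
  have H1 : FTPaux.Rch Sstar s t := by
    have h0 := hfeas ∅ (Finset.empty_subset _) (by simp)
    refine FTPaux.rtg_mono (fun x y hxy => ?_) h0
    simpa using hxy
  have H3 : ∀ h ∈ M, FTPaux.Rch (Sstar.erase h) s t ∨ FTPaux.Rch (Sstar.erase h) s t := by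
    intro h hm
    left
    have h0 := hfeas {h} (Finset.singleton_subset_iff.mpr hm) (by simp)
    refine FTPaux.rtg_mono (fun x y hxy => ?_) h0
    rw [Finset.erase_eq]
    exact hxy
  obtain ⟨L₁, L₂, h1W, h2W, h1T, h2T, hdisj⟩ :=
    FTPaux.key Sstar.card Sstar le_rfl M s t t H1 H1 H3
  obtain ⟨P₁, hP1W, hP1nd, hP1a⟩ := FTPaux.simplify h1W
  obtain ⟨P₂, hP2W, hP2nd, hP2a⟩ := FTPaux.simplify h2W
  refine ⟨FTPaux.arcs P₁, FTPaux.arcs P₂, hP1a.trans h1T, hP2a.trans h2T,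
    ⟨P₁, hP1W.1, hP1W.2, hP1nd, rfl⟩, ⟨P₂, hP2W.1, hP2W.2, hP2nd, rfl⟩, ?_⟩
  refine FTPaux.tri_empty (fun p hp1 hp2 hpM => ?_)
  have hmem : p ∈ FTPaux.arcs L₁ ∩ FTPaux.arcs L₂ ∩ M :=
    Finset.mem_inter.mpr ⟨Finset.mem_inter.mpr ⟨hP1a hp1, hP2a hp2⟩, hpM⟩
  rw [hdisj] at hmem
  exact Finset.notMem_empty _ hmem
end

section
/- Let D = (V,A) be a directed graph, s ∈ V, T ⊆ V a set of terminals, and m ≤ |T| an integer. Form D' by adding a new vertex t and the arc set A' = {(u,t) : u ∈ T}, and set M = A' and k = m−1. Then for every S with A' ⊆ S ⊆ A ∪ A', the set S is a feasible FTP solution for the instance (D', s, t, M, m−1) if and only if there are at least m terminals u ∈ T such that (V, S ∩ A) contains a directed s-u path. -/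
private lemma descend {V : Type*} [DecidableEq V] {S F : Finset (Option V × Option V)}
    {rel : V → V → Prop}
    (hstep : ∀ c' b : V, ((some c' : Option V), some b) ∈ S \ F → rel c' b)
    (hsrc : ∀ p ∈ S, ∃ c : V, p.1 = some c)
    {s : V} {d : Option V}
    (h : Relation.ReflTransGen (fun x y => (x, y) ∈ S \ F) (some s) d) :
    ∀ v : V, d = some v → Relation.ReflTransGen rel s v := by
  induction h with
  | refl => intro v hv; cases hv; exact .refl
  | @tail b c h1 h2 ih =>
    intro v hv; subst hv
    obtain ⟨c', hc'⟩ := hsrc (b, some v) (Finset.mem_sdiff.1 h2).1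
    simp only at hc'
    subst hc'
    exact (ih c' rfl).tail (hstep c' v h2)

/-- Correctness of the reduction from Directed `m`-Steiner Tree to FTP.
The graph `D'` lives on vertex set `Option V`, where `none` is the new sink `t`;
`A' = {(u, t) : u ∈ T}` are the (vulnerable) new zero-cost arcs. A set `S` with
`A' ⊆ S ⊆ A ∪ A'` is feasible for the FTP instance `(D', s, t, M = A', k = m - 1)`
iff at least `m` terminals are reachable from `s` in `(V, S ∩ A)`. -/
theorem stmt5 {V : Type*} [DecidableEq V] (A : Finset (V × V)) (T : Finset V) (s : V)
    (m : ℕ) (hm : 1 ≤ m) (hmT : m ≤ T.card)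
    (A' : Finset (Option V × Option V))
    (hA' : A' = T.image (fun u => ((some u : Option V), (none : Option V))))
    (S : Finset (Option V × Option V))
    (hS1 : A' ⊆ S)
    (hS2 : S ⊆ A.image (fun e => ((some e.1 : Option V), some e.2)) ∪ A') :
    ftpFeasible S A' (some s) none (m - 1) ↔
      ∃ T' ⊆ T, T'.card = m ∧ ∀ u ∈ T',
        Relation.ReflTransGen
          (fun x y => (x, y) ∈ A ∧ ((some x : Option V), some y) ∈ S) s u := by
  classical
  set rel : V → V → Prop := fun x y => (x, y) ∈ A ∧ ((some x : Option V), some y) ∈ S with hrel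
  have hsrc : ∀ p ∈ S, ∃ c : V, p.1 = some c := by
    intro p hp
    rcases Finset.mem_union.1 (hS2 hp) with h | h
    · rcases Finset.mem_image.1 h with ⟨e, _, he⟩
      exact ⟨e.1, by rw [← he]⟩
    · rw [hA'] at h
      rcases Finset.mem_image.1 h with ⟨u, _, he⟩
      exact ⟨u, by rw [← he]⟩
  have hA'snd : ∀ p ∈ A', p.2 = (none : Option V) := by
    intro p hp
    rw [hA'] at hp
    rcases Finset.mem_image.1 hp with ⟨u, _, he⟩
    rw [← he]
  constructor
  · intro hfeas
    set R := T.filter (fun u => Relation.ReflTransGen rel s u) with hRdef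
    have hR : m ≤ R.card := by
      by_contra hlt
      push_neg at hlt
      set F : Finset (Option V × Option V) := R.image (fun u => (some u, none)) with hF
      have hFsub : F ⊆ A' := by
        rw [hA']
        intro p hp
        rcases Finset.mem_image.1 hp with ⟨u, hu, he⟩
        exact Finset.mem_image.2 ⟨u, (Finset.mem_filter.1 hu).1, he⟩
      have hFcard : F.card ≤ m - 1 :=
        le_trans Finset.card_image_le (by omega)
      have hpath := hfeas F hFsub hFcard
      rcases hpath.cases_tail with h | ⟨c, hc, hcstep⟩
      · exact nomatch h
      · have hcS : (c, (none : Option V)) ∈ S := (Finset.mem_sdiff.1 hcstep).1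
        have hcF : (c, (none : Option V)) ∉ F := (Finset.mem_sdiff.1 hcstep).2
        have hcA' : (c, (none : Option V)) ∈ A' := by
          rcases Finset.mem_union.1 (hS2 hcS) with h | h
          · exfalso
            rcases Finset.mem_image.1 h with ⟨e, _, he⟩
            have := congrArg Prod.snd he
            simp at this
          · exact h
        rw [hA'] at hcA'
        rcases Finset.mem_image.1 hcA' with ⟨u, huT, he⟩
        have hcu : c = some u := by
          have := congrArg Prod.fst he
          simpa using this.symm
        subst hcu
        have hstep' : ∀ c' b : V, ((some c' : Option V), some b) ∈ S \ F → rel c' b := by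
          intro c' b hmem
          have hS' : ((some c' : Option V), some b) ∈ S := (Finset.mem_sdiff.1 hmem).1
          refine ⟨?_, hS'⟩
          rcases Finset.mem_union.1 (hS2 hS') with h | h
          · rcases Finset.mem_image.1 h with ⟨e, heA, he⟩
            have h1 := congrArg Prod.fst he
            have h2 := congrArg Prod.snd he
            simp only [Option.some.injEq] at h1 h2
            subst h1; subst h2; simpa using heA
          · exfalso
            have := hA'snd _ h
            simp at this
        have hreach : Relation.ReflTransGen rel s u := descend hstep' hsrc hc u rfl
        have huR : u ∈ R := Finset.mem_filter.2 ⟨huT, hreach⟩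
        exact hcF (Finset.mem_image.2 ⟨u, huR, he⟩)
    obtain ⟨T', hT'R, hT'card⟩ := Finset.exists_subset_card_eq hR
    refine ⟨T', fun u hu => (Finset.mem_filter.1 (hT'R hu)).1, hT'card,
      fun u hu => (Finset.mem_filter.1 (hT'R hu)).2⟩
  · rintro ⟨T', hT'T, hT'card, hT'path⟩ F hFA' hFcard
    obtain ⟨u, huT', huF⟩ : ∃ u ∈ T', ((some u : Option V), (none : Option V)) ∉ F := by
      by_contra hcon
      push_neg at hcon
      have hsub : T'.image (fun u => ((some u : Option V), (none : Option V))) ⊆ F := by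
        intro p hp
        rcases Finset.mem_image.1 hp with ⟨u, hu, he⟩
        exact he ▸ hcon u hu
      have hinj : Set.InjOn (fun u : V => ((some u : Option V), (none : Option V))) T' := by
        intro a _ b _ hab
        simpa using congrArg Prod.fst hab
      have := le_trans (Finset.card_le_card hsub) hFcard
      rw [Finset.card_image_of_injOn hinj, hT'card] at this
      omega
    have hlift : ∀ v : V, Relation.ReflTransGen rel s v →
        Relation.ReflTransGen (fun x y => (x, y) ∈ S \ F) (some s) (some v) := by
      intro v hv
      induction hv with
      | refl => exact .refl
      | @tail b c h1 h2 ih =>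
        refine ih.tail (Finset.mem_sdiff.2 ⟨h2.2, fun hmem => ?_⟩)
        have := hA'snd _ (hFA' hmem)
        simp at this
    refine (hlift u (hT'path u huT')).tail (Finset.mem_sdiff.2 ⟨?_, huF⟩)
    exact hS1 (hA' ▸ Finset.mem_image.2 ⟨u, hT'T huT', rfl⟩)
end

section
/- Let D₁ = (V,A₁) and D₂ = (V,A₂) be directed graphs on the same vertex set V, let s ∈ V, T ⊆ V, and m ≤ |T|. Form a directed graph D on two disjoint copies V¹, V² of V whose arcs are the arcs of A₁ on V¹, the reversals of the arcs of A₂ on V², and for each u ∈ T an arc e_u from the copy u¹ ∈ V¹ to the copy u² ∈ V². Set M = {e_u : u ∈ T} and k = m−1, with source s¹ and sink s². Then a set S containing all arcs e_u is a feasible FTP solution for (D, s¹, s², M, m−1) if and only if there are at least m terminals u ∈ T such that S ∩ A₁ contains a directed s-u path in D₁ and S ∩ A₂ contains a directed s-u path in D₂. -/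
/-- Correctness of the reduction from Simultaneous Directed `m`-Steiner Tree to FTP.
The constructed graph lives on `V ⊕ V` (two disjoint copies of `V`): it has the arcs
of `A₁` on the first copy, the reversals of the arcs of `A₂` on the second copy, and
for each terminal `u ∈ T` the vulnerable arc `e_u = (inl u, inr u)`. A set `S`
containing all arcs `e_u` (and contained in the constructed arc set) is feasible for
the FTP instance with source `inl s`, sink `inr s`, `M = {e_u : u ∈ T}` and
`k = m - 1` iff for at least `m` terminals `u ∈ T`, `S ∩ A₁` contains a directed
`s`-`u` path in `D₁` and `S ∩ A₂` contains a directed `s`-`u` path in `D₂`. -/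
theorem stmt6 {V : Type*} [DecidableEq V] (A₁ A₂ : Finset (V × V)) (T : Finset V) (s : V)
    (m : ℕ) (hm : 1 ≤ m) (hmT : m ≤ T.card)
    (M : Finset ((V ⊕ V) × (V ⊕ V)))
    (hM : M = T.image (fun u => ((Sum.inl u : V ⊕ V), (Sum.inr u : V ⊕ V))))
    (S : Finset ((V ⊕ V) × (V ⊕ V)))
    (hS1 : M ⊆ S)
    (hS2 : S ⊆ A₁.image (fun e => ((Sum.inl e.1 : V ⊕ V), (Sum.inl e.2 : V ⊕ V))) ∪
            A₂.image (fun e => ((Sum.inr e.2 : V ⊕ V), (Sum.inr e.1 : V ⊕ V))) ∪ M) :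
    ftpFeasible S M (Sum.inl s) (Sum.inr s) (m - 1) ↔
      ∃ T' ⊆ T, T'.card = m ∧ ∀ u ∈ T',
        Relation.ReflTransGen
          (fun x y => (x, y) ∈ A₁ ∧ ((Sum.inl x : V ⊕ V), (Sum.inl y : V ⊕ V)) ∈ S) s u ∧
        Relation.ReflTransGen
          (fun x y => (x, y) ∈ A₂ ∧ ((Sum.inr y : V ⊕ V), (Sum.inr x : V ⊕ V)) ∈ S) s u := by
  classical
  subst hM
  have inj : Function.Injective (fun u : V => ((Sum.inl u : V ⊕ V), (Sum.inr u : V ⊕ V))) := by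
    intro a b h; simpa using h
  set R₁ : V → V → Prop := fun x y => (x, y) ∈ A₁ ∧ ((Sum.inl x : V ⊕ V), (Sum.inl y : V ⊕ V)) ∈ S with hR₁
  set R₂ : V → V → Prop := fun x y => (x, y) ∈ A₂ ∧ ((Sum.inr y : V ⊕ V), (Sum.inr x : V ⊕ V)) ∈ S with hR₂
  constructor
  · intro hfeas
    set G := T.filter (fun u => Relation.ReflTransGen R₁ s u ∧ Relation.ReflTransGen R₂ s u)
      with hGdef
    have hcard : m ≤ G.card := by
      by_contra hlt
      push_neg at hlt
      set F := G.image (fun u => ((Sum.inl u : V ⊕ V), (Sum.inr u : V ⊕ V))) with hFdef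
      have hFsub : F ⊆ T.image (fun u => ((Sum.inl u : V ⊕ V), (Sum.inr u : V ⊕ V))) :=
        Finset.image_subset_image (Finset.filter_subset _ _)
      have hFcard : F.card ≤ m - 1 := by
        rw [hFdef, Finset.card_image_of_injective _ inj]
        omega
      have hpath := hfeas F hFsub hFcard
      set r : (V ⊕ V) → (V ⊕ V) → Prop := fun x y => (x, y) ∈ S \ F with hr
      have classify : ∀ x y : V ⊕ V, r x y →
          (∃ a b, x = Sum.inl a ∧ y = Sum.inl b ∧ R₁ a b) ∨
          (∃ a b, x = Sum.inr a ∧ y = Sum.inr b ∧ (b, a) ∈ A₂ ∧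
            ((Sum.inr a : V ⊕ V), (Sum.inr b : V ⊕ V)) ∈ S) ∨
          (∃ u, u ∈ T ∧ x = Sum.inl u ∧ y = Sum.inr u ∧ (x, y) ∉ F) := by
        intro x y hxy
        rw [hr, Finset.mem_sdiff] at hxy
        obtain ⟨hS, hF⟩ := hxy
        have := hS2 hS
        simp only [Finset.mem_union, Finset.mem_image, Prod.mk.injEq, Prod.exists] at this
        rcases this with ((⟨a, b, hab, h1, h2⟩ | ⟨a, b, hab, h1, h2⟩) | ⟨u, hu, h1, h2⟩)
        · exact Or.inl ⟨a, b, h1.symm, h2.symm, hab, h1 ▸ h2 ▸ hS⟩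
        · exact Or.inr (Or.inl ⟨b, a, h1.symm, h2.symm, hab, h1 ▸ h2 ▸ hS⟩)
        · exact Or.inr (Or.inr ⟨u, hu, h1.symm, h2.symm, hF⟩)
      have aux2 : ∀ c, Relation.ReflTransGen r c (Sum.inr s) →
          ∀ b, c = Sum.inr b → Relation.ReflTransGen R₂ s b := by
        intro c h
        induction h using Relation.ReflTransGen.head_induction_on with
        | refl => intro b hb; cases Sum.inr.inj hb; exact Relation.ReflTransGen.refl
        | head hstep _ ih =>
          intro b hb; subst hb
          rcases classify _ _ hstep with ⟨a, b', h1, _⟩ | ⟨a, b', h1, h2, h3, h4⟩ |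
            ⟨u, _, h1, _⟩
          · exact absurd h1 (by simp)
          · cases Sum.inr.inj h1
            exact (ih b' h2).tail ⟨h3, h2 ▸ h4⟩
          · exact absurd h1 (by simp)
      have aux1 : ∀ c, Relation.ReflTransGen r c (Sum.inr s) →
          ∀ a, c = Sum.inl a → ∃ u, u ∈ T ∧
            ((Sum.inl u : V ⊕ V), (Sum.inr u : V ⊕ V)) ∉ F ∧
            Relation.ReflTransGen R₁ a u ∧ Relation.ReflTransGen R₂ s u := by
        intro c h
        induction h using Relation.ReflTransGen.head_induction_on with
        | refl => intro a ha; exact absurd ha (by simp)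
        | head hstep htail ih =>
          intro a ha; subst ha
          rcases classify _ _ hstep with ⟨a', b', h1, h2, h3⟩ | ⟨a', b', h1, _⟩ |
            ⟨u, hu, h1, h2, h3⟩
          · cases Sum.inl.inj h1
            obtain ⟨u, hu, hnF, hp1, hp2⟩ := ih b' h2
            exact ⟨u, hu, hnF, (Relation.ReflTransGen.head h3 hp1), hp2⟩
          · exact absurd h1 (by simp)
          · obtain rfl := Sum.inl.inj h1
            exact ⟨a, hu, h2 ▸ h3, Relation.ReflTransGen.refl, aux2 _ (h2 ▸ htail) a rfl⟩
      obtain ⟨u, hu, hnF, hp1, hp2⟩ := aux1 _ hpath s rfl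
      have : u ∈ G := Finset.mem_filter.mpr ⟨hu, hp1, hp2⟩
      exact hnF (Finset.mem_image_of_mem _ this)
    obtain ⟨T', hT'G, hT'card⟩ := Finset.exists_subset_card_eq hcard
    exact ⟨T', hT'G.trans (Finset.filter_subset _ _), hT'card,
      fun u hu => (Finset.mem_filter.mp (hT'G hu)).2⟩
  · rintro ⟨T', hT'T, hT'card, hgood⟩
    intro F hF hFcard
    have : ∃ u ∈ T', ((Sum.inl u : V ⊕ V), (Sum.inr u : V ⊕ V)) ∉ F := by
      by_contra hall
      push_neg at hall
      have hsub : T'.image (fun u => ((Sum.inl u : V ⊕ V), (Sum.inr u : V ⊕ V))) ⊆ F :=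
        fun x hx => by
          obtain ⟨u, hu, rfl⟩ := Finset.mem_image.mp hx
          exact hall u hu
      have := (Finset.card_le_card hsub).trans hFcard
      rw [Finset.card_image_of_injective _ inj, hT'card] at this
      omega
    obtain ⟨u, huT', hnF⟩ := this
    have hnotM1 : ∀ x y : V, ((Sum.inl x : V ⊕ V), (Sum.inl y : V ⊕ V)) ∉ F := by
      intro x y h
      have := hF h
      simp only [Finset.mem_image, Prod.mk.injEq] at this
      obtain ⟨v, _, _, h2⟩ := this
      exact absurd h2 (by simp)
    have hnotM2 : ∀ x y : V, ((Sum.inr x : V ⊕ V), (Sum.inr y : V ⊕ V)) ∉ F := by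
      intro x y h
      have := hF h
      simp only [Finset.mem_image, Prod.mk.injEq] at this
      obtain ⟨v, _, h1, _⟩ := this
      exact absurd h1 (by simp)
    obtain ⟨hp1, hp2⟩ := hgood u huT'
    have part1 : Relation.ReflTransGen (fun x y => (x, y) ∈ S \ F)
        (Sum.inl s : V ⊕ V) (Sum.inl u) :=
      Relation.ReflTransGen.lift Sum.inl
        (fun a b (hab : R₁ a b) => Finset.mem_sdiff.mpr ⟨hab.2, hnotM1 a b⟩) _ _ hp1
    have part3 : Relation.ReflTransGen (fun x y => (x, y) ∈ S \ F)
        (Sum.inr u : V ⊕ V) (Sum.inr s) := by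
      have hswap : Relation.ReflTransGen (Function.swap R₂) u s :=
        Relation.reflTransGen_swap.mpr hp2
      exact Relation.ReflTransGen.lift Sum.inr
        (fun a b (hab : Function.swap R₂ a b) => Finset.mem_sdiff.mpr ⟨hab.2, hnotM2 a b⟩) _ _ hswap
    have mid : ((Sum.inl u : V ⊕ V), (Sum.inr u : V ⊕ V)) ∈ S \ F :=
      Finset.mem_sdiff.mpr ⟨hS1 (Finset.mem_image_of_mem _ (hT'T huT')), hnF⟩
    exact (part1.tail mid).trans part3
end

section
/- Fix integers k ≥ 0 and p > k, and let D be the directed multigraph on vertices {s,t} with p parallel arcs from s to t, each of unit cost and each vulnerable (M = A). Then: (i) a set S of arcs is a feasible FTP solution with parameter k if and only if |S| ≥ k+1, so the optimal integral cost is k+1; (ii) the constant vector x with x_e = 1/(p−k) for every arc e is fractionally feasible (for every F ⊆ M with |F| ≤ k, the total x-capacity of the surviving arcs is at least 1) and has cost p/(p−k). Consequently the ratio between the integral and fractional optima is (k+1)(p−k)/p, which tends to k+1 as p → ∞. -/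
/-- The tight integrality-gap family: the digraph on `{s, t}` with `p > k` parallel
unit-cost arcs (indexed by `Fin p`) from `s` to `t`, all vulnerable.
(i) A set `S` of arcs is a feasible FTP solution (after removing any `F` with
`|F| ≤ k` some arc, i.e. an `s`-`t` path, survives) iff `|S| ≥ k + 1`; hence the
optimal integral cost is `k + 1`.
(ii) The constant capacity vector `x ≡ 1/(p-k)` takes values in `[0,1]`, is
fractionally feasible, and has cost `p/(p-k)`.
Consequently the integral/fractional ratio is `(k+1)(p-k)/p`, which tends to `k+1`
as `p → ∞`. -/
theorem stmt8 (k p : ℕ) (hkp : k < p) :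
    (∀ S : Finset (Fin p),
      (∀ F : Finset (Fin p), F.card ≤ k → (S \ F).Nonempty) ↔ k + 1 ≤ S.card) ∧
    ((0 : ℝ) ≤ 1 / ((p : ℝ) - k) ∧ 1 / ((p : ℝ) - k) ≤ 1) ∧
    (∀ F : Finset (Fin p), F.card ≤ k →
      (1 : ℝ) ≤ ∑ _e ∈ (Finset.univ : Finset (Fin p)) \ F, (1 / ((p : ℝ) - k))) ∧
    (∑ _e : Fin p, (1 / ((p : ℝ) - k))) = (p : ℝ) / ((p : ℝ) - k) ∧
    ((k : ℝ) + 1) / ((p : ℝ) / ((p : ℝ) - k)) = ((k : ℝ) + 1) * ((p : ℝ) - k) / p ∧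
    Filter.Tendsto (fun q : ℕ => ((k : ℝ) + 1) * ((q : ℝ) - k) / q)
      Filter.atTop (nhds ((k : ℝ) + 1)) := by
  have hpk : (0 : ℝ) < (p : ℝ) - k := by
    have : (k : ℝ) < p := by exact_mod_cast hkp
    linarith
  have hp0 : (0 : ℝ) < p := by
    have : 0 < p := by omega
    exact_mod_cast this
  refine ⟨?_, ⟨by positivity, ?_⟩, ?_, ?_, ?_, ?_⟩
  · intro S
    constructor
    · intro h
      by_contra hc
      push_neg at hc
      have hSk : S.card ≤ k := by omega
      have := h S hSk
      simp at this
    · intro hS F hF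
      rw [← Finset.card_pos]
      have := Finset.card_le_card_sdiff_add_card (s := S) (t := F)
      omega
  · rw [div_le_one hpk]
    have : (k : ℝ) + 1 ≤ p := by exact_mod_cast hkp
    linarith
  · intro F hF
    rw [Finset.sum_const, nsmul_eq_mul, Finset.card_sdiff_of_subset (Finset.subset_univ F),
      Finset.card_univ, Fintype.card_fin]
    have hFc : ((p - F.card : ℕ) : ℝ) = (p : ℝ) - F.card := by
      have : F.card ≤ p := le_of_lt (lt_of_le_of_lt hF hkp)
      push_cast [this]; ring
    rw [hFc, mul_one_div, le_div_iff₀ hpk, one_mul]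
    have : (F.card : ℝ) ≤ k := by exact_mod_cast hF
    linarith
  · rw [Finset.sum_const, nsmul_eq_mul, Finset.card_univ, Fintype.card_fin]
    ring
  · field_simp
  · have h1 : Filter.Tendsto (fun q : ℕ => ((k : ℝ) + 1) * (k : ℝ) / q)
      Filter.atTop (nhds 0) := by
      apply tendsto_const_div_atTop_nhds_zero_nat
    have h2 : Filter.Tendsto (fun q : ℕ => ((k : ℝ) + 1) - ((k : ℝ) + 1) * (k : ℝ) / q)
      Filter.atTop (nhds (((k : ℝ) + 1) - 0)) := (tendsto_const_nhds).sub h1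
    rw [sub_zero] at h2
    apply h2.congr'
    filter_upwards [Filter.eventually_gt_atTop 0] with q hq
    have hq' : (q : ℝ) ≠ 0 := by positivity
    field_simp
end

section
/- Let D = (V,A) be a directed graph with nonnegative arc costs w, s,t ∈ V, M ⊆ A, k ≥ 0, and let X* ⊆ A be an optimal (minimum-cost) feasible FTP solution for (D,s,t,M,k). Suppose u,v ∈ V are vertices such that every directed s-t path in (V,X*) visits u and later v, and let Y ⊆ X* be the set of arcs lying on some directed u-v path of (V,X*). Then Y is a feasible FTP solution for the instance (D,u,v,M,k), and its cost is minimum among all feasible FTP solutions for (D,u,v,M,k). -/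
section helpers
variable {α : Type*} {r : α → α → Prop}

lemma chain'_iff_zip : ∀ {L : List α},
    L.Chain' r ↔ ∀ p ∈ L.zip L.tail, r p.1 p.2
  | [] => by simp [List.Chain']
  | [a] => by simp [List.Chain']
  | a :: b :: L => by
    rw [List.Chain', List.isChain_cons_cons]
    simp only [List.tail_cons, List.zip_cons_cons, List.mem_cons]
    constructor
    · rintro ⟨h1, h2⟩ p (rfl | hp)
      · exact h1
      · exact chain'_iff_zip.mp h2 p hp
    · intro h
      exact ⟨h _ (Or.inl rfl), chain'_iff_zip.mpr fun p hp => h p (Or.inr hp)⟩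

lemma mem_of_getLast?' {L : List α} {a : α} (h : L.getLast? = some a) : a ∈ L := by
  obtain ⟨hne, rfl⟩ := List.mem_getLast?_eq_getLast h
  exact List.getLast_mem hne

lemma head?_append_ne_nil {L L' : List α} (h : L ≠ []) : (L ++ L').head? = L.head? := by
  obtain ⟨b, M, rfl⟩ := List.exists_cons_of_ne_nil h
  rfl

lemma rtg_of_chain' : ∀ {L : List α} {a b : α}, L.Chain' r → L.head? = some a →
      L.getLast? = some b → Relation.ReflTransGen r a b
  | [], a, b => by simp
  | [x], a, b => by
    intro _ ha hb
    simp only [List.head?_cons, Option.some.injEq] at ha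
    simp only [List.getLast?_singleton, Option.some.injEq] at hb
    subst ha; subst hb; exact .refl
  | x :: y :: L, a, b => by
    intro h ha hb
    simp only [List.head?_cons, Option.some.injEq] at ha
    subst ha
    rw [List.Chain', List.isChain_cons_cons] at h
    rw [List.getLast?_cons_cons] at hb
    exact .head h.1 (rtg_of_chain' h.2 rfl hb)

lemma exists_path {a b : α} (h : Relation.ReflTransGen r a b) [DecidableEq α] :
    ∃ L : List α, L.head? = some a ∧ L.getLast? = some b ∧ L.Nodup ∧ L.Chain' r := by
  induction h with
  | refl => exact ⟨[a], rfl, rfl, List.nodup_singleton a, List.isChain_singleton a⟩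
  | @tail c d hac hcd ih =>
    obtain ⟨L, ha, hc, hnd, hch⟩ := ih
    by_cases hd : d ∈ L
    · obtain ⟨L₁, L₂, rfl⟩ := List.append_of_mem hd
      refine ⟨L₁ ++ [d], ?_, List.getLast?_concat, ?_, ?_⟩
      · rw [List.head?_append, ← ha, List.head?_append]; rfl
      · refine List.Sublist.nodup ?_ hnd
        have : L₁ ++ d :: L₂ = (L₁ ++ [d]) ++ L₂ := by simp
        rw [this]
        exact (L₁ ++ [d]).prefix_append L₂ |>.sublist
      · exact hch.prefix ⟨L₂, by simp⟩
    · refine ⟨L ++ [d], ?_, List.getLast?_concat, ?_, ?_⟩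
      · rw [List.head?_append, ha]; rfl
      · exact List.nodup_append'.mpr ⟨hnd, List.nodup_singleton d,
          fun x hx hx' => hd (by simp at hx'; exact hx' ▸ hx)⟩
      · exact List.isChain_append.mpr ⟨hch, List.isChain_singleton d,
          fun x hx y hy => by
            rw [hc] at hx; simp at hx hy; subst hx; subst hy; exact hcd⟩

lemma zip_decomp : ∀ {L : List α} {x y : α}, (x, y) ∈ L.zip L.tail →
      ∃ l₁ l₂, L = l₁ ++ x :: y :: l₂
  | [], x, y => by simp
  | [a], x, y => by simp
  | a :: b :: L, x, y => by
    simp only [List.tail_cons, List.zip_cons_cons, List.mem_cons, Prod.mk.injEq]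
    rintro (⟨rfl, rfl⟩ | h)
    · exact ⟨[], L, rfl⟩
    · obtain ⟨l₁, l₂, hl⟩ := zip_decomp (L := b :: L) h
      exact ⟨a :: l₁, l₂, by rw [List.cons_append, ← hl]⟩

lemma mem_tail_zip : ∀ {L : List α} {z : α}, z ∈ L.tail → ∃ x, (x, z) ∈ L.zip L.tail
  | [], z => by simp
  | [a], z => by simp
  | a :: b :: L, z => by
    intro hz
    simp only [List.tail_cons, List.mem_cons] at hz
    rcases hz with rfl | hz
    · exact ⟨a, by simp⟩
    · obtain ⟨x, hx⟩ := mem_tail_zip (L := b :: L) hz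
      exact ⟨x, List.mem_cons_of_mem _ hx⟩
end helpers

/-- `L` is (the vertex list of) a directed `a`-`b` path using only arcs of `S`. -/
def IsPathIn {V : Type*} [DecidableEq V] (S : Finset (V × V)) (a b : V) (L : List V) : Prop :=
  L.head? = some a ∧ L.getLast? = some b ∧ L.Nodup ∧
    L.Chain' (fun x y => (x, y) ∈ S)

section avoid
variable {V : Type*} [DecidableEq V]

lemma chain'_avoid {X : Finset (V × V)} {L : List V} {c : V}
    (hch : L.Chain' (fun x y => (x, y) ∈ X)) (hno : c ∉ L.tail) :
    L.Chain' (fun x y => (x, y) ∈ X ∧ y ≠ c) := by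
  rw [chain'_iff_zip] at hch ⊢
  rintro ⟨x, y⟩ hp
  exact ⟨hch _ hp, fun h => hno (h ▸ (List.of_mem_zip hp).2)⟩

lemma exists_avoid (X : Finset (V × V)) {s t c : V}
    (h : Relation.ReflTransGen (fun x y => (x, y) ∈ X ∧ y ≠ c) s t) (hs : s ≠ c) :
    ∃ L, IsPathIn X s t L ∧ c ∉ L := by
  obtain ⟨L, ha, hb, hnd, hch⟩ := exists_path h
  refine ⟨L, ⟨ha, hb, hnd, hch.imp fun a b hab => hab.1⟩, ?_⟩
  intro hcL
  rw [← List.cons_head?_tail ha] at hcL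
  rcases List.mem_cons.mp hcL with h' | h'
  · exact hs h'.symm
  · obtain ⟨x, hx⟩ := mem_tail_zip h'
    exact (chain'_iff_zip.mp hch _ hx).2 rfl

/-- The key decomposition lemma: from an `s`-`t` walk in `X \ F`, produce a
`u`-`v` walk in `Y \ F`, an `s`-`u` walk in `(X \ Y) \ F` and a `v`-`t` walk
in `(X \ Y) \ F`. -/
lemma key_decomp (X Y F : Finset (V × V)) (s t u v : V)
    (hvisit : ∀ L : List V, IsPathIn X s t L →
      ∃ l₁ l₂ l₃ : List V, L = l₁ ++ u :: (l₂ ++ v :: l₃))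
    (hY : ∀ e : V × V, e ∈ Y ↔ ∃ L : List V, IsPathIn X u v L ∧ e ∈ L.zip L.tail)
    (h : Relation.ReflTransGen (fun x y => (x, y) ∈ X \ F) s t) :
    Relation.ReflTransGen (fun x y => (x, y) ∈ Y \ F) u v ∧
    Relation.ReflTransGen (fun x y => (x, y) ∈ (X \ Y) \ F) s u ∧
    Relation.ReflTransGen (fun x y => (x, y) ∈ (X \ Y) \ F) v t := by
  obtain ⟨L, hLh, hLl, hLnd, hLch⟩ := exists_path h
  have hLX : L.Chain' (fun x y => (x, y) ∈ X) :=
    hLch.imp fun a b hab => (Finset.mem_sdiff.mp hab).1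
  obtain ⟨l₁, l₂, l₃, hdec⟩ := hvisit L ⟨hLh, hLl, hLnd, hLX⟩
  have hL1 : L = (l₁ ++ [u]) ++ (l₂ ++ v :: l₃) := by rw [hdec]; simp
  have hL2 : L = (l₁ ++ u :: l₂) ++ (v :: l₃) := by rw [hdec]; simp
  -- nodup facts
  have hnd := hLnd
  rw [hdec, List.nodup_append', List.nodup_cons, List.nodup_append', List.nodup_cons] at hnd
  obtain ⟨hnd₁, ⟨humid, hnd₂, ⟨hv₃, hnd₃⟩, hdisj₂⟩, hdisj₁⟩ := hnd
  have hu₂ : u ∉ l₂ := fun h' => humid (List.mem_append_left _ h')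
  have huv : u ≠ v := fun h' => humid (List.mem_append_right _ (h' ▸ List.mem_cons_self))
  have hu₃ : u ∉ l₃ := fun h' => humid (List.mem_append_right _ (List.mem_cons_of_mem _ h'))
  have hu₁ : u ∉ l₁ := fun h' => hdisj₁ h' (List.mem_cons_self)
  have hv₁ : v ∉ l₁ := fun h' => hdisj₁ h'
    (List.mem_cons_of_mem _ (List.mem_append_right _ (List.mem_cons_self)))
  -- head / last facts
  have hndPre : (l₁ ++ [u]).Nodup := by
    rw [hL1] at hLnd; exact ((l₁ ++ [u]).prefix_append _).sublist.nodup hLnd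
  have hs_head : (l₁ ++ [u]).head? = some s := by
    rw [hL1, head?_append_ne_nil (by simp)] at hLh; exact hLh
  have ht_last : (v :: l₃).getLast? = some t := by
    rw [hL2, List.getLast?_append_of_ne_nil _ (by simp)] at hLl; exact hLl
  have hPreXF : (l₁ ++ [u]).Chain' (fun x y => (x, y) ∈ X \ F) :=
    hLch.prefix ⟨l₂ ++ v :: l₃, hL1.symm⟩
  have hPreX : (l₁ ++ [u]).Chain' (fun x y => (x, y) ∈ X) :=
    hPreXF.imp fun a b hab => (Finset.mem_sdiff.mp hab).1
  have hSufXF : (v :: l₃).Chain' (fun x y => (x, y) ∈ X \ F) :=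
    hLch.suffix ⟨l₁ ++ u :: l₂, hL2.symm⟩
  -- the middle u-v path
  have hMidinf : (u :: (l₂ ++ [v])) <:+: L := ⟨l₁, l₃, by rw [hdec]; simp⟩
  have hMidXF : (u :: (l₂ ++ [v])).Chain' (fun x y => (x, y) ∈ X \ F) := hLch.infix hMidinf
  have hMidlast : (u :: (l₂ ++ [v])).getLast? = some v := List.getLast?_concat (l := u :: l₂)
  have hMidPath : IsPathIn X u v (u :: (l₂ ++ [v])) :=
    ⟨rfl, hMidlast, hMidinf.sublist.nodup hLnd,
      hMidXF.imp fun a b hab => (Finset.mem_sdiff.mp hab).1⟩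
  refine ⟨?_, ?_, ?_⟩
  · -- middle component
    refine rtg_of_chain' (L := u :: (l₂ ++ [v])) (chain'_iff_zip.mpr ?_) rfl hMidlast
    rintro ⟨x, y⟩ hp
    have hxy := chain'_iff_zip.mp hMidXF _ hp
    rw [Finset.mem_sdiff] at hxy ⊢
    exact ⟨(hY _).mpr ⟨_, hMidPath, hp⟩, hxy.2⟩
  · -- prefix component
    refine rtg_of_chain' (chain'_iff_zip.mpr ?_) hs_head (List.getLast?_concat)
    rintro ⟨x, y⟩ hp
    have hxy := chain'_iff_zip.mp hPreXF _ hp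
    rw [Finset.mem_sdiff] at hxy
    rw [Finset.mem_sdiff, Finset.mem_sdiff]
    refine ⟨⟨hxy.1, ?_⟩, hxy.2⟩
    intro hyY
    obtain ⟨P, ⟨hPh, hPl, hPnd, hPchX⟩, hzP⟩ := (hY _).mp hyY
    obtain ⟨q₁, q₂, hq⟩ := zip_decomp hp
    obtain ⟨p₁, p₂, hpP⟩ := zip_decomp hzP
    -- l₁ is nonempty
    have hl₁ : l₁ ≠ [] := by
      rintro rfl
      apply_fun List.length at hq
      simp at hq
      omega
    have hs₁ : s ∈ l₁ := by
      obtain ⟨a, l₁', rfl⟩ := List.exists_cons_of_ne_nil hl₁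
      rw [List.cons_append, List.head?_cons, Option.some.injEq] at hs_head
      exact hs_head ▸ List.mem_cons_self
    have hs_ne_u : s ≠ u := fun h' => hu₁ (h' ▸ hs₁)
    -- u not in q₁ ++ [x]
    have h1 : (q₁ ++ [x]) ++ (y :: q₂) = l₁ ++ [u] := by simpa using hq.symm
    have h2 : u ∈ y :: q₂ := by
      have h3 : (l₁ ++ [u]).getLast? = some u := List.getLast?_concat
      rw [hq, List.getLast?_append_cons, List.getLast?_cons_cons] at h3
      exact mem_of_getLast?' h3
    have huq : u ∉ q₁ ++ [x] := by
      intro h'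
      rw [← h1, List.nodup_append'] at hndPre
      exact hndPre.2.2 h' h2
    -- segment 1 : s → x
    have hseg1X : (q₁ ++ [x]).Chain' (fun a b => (a, b) ∈ X) := hPreX.prefix ⟨y :: q₂, h1⟩
    have hseg1h : (q₁ ++ [x]).head? = some s := by
      have : (q₁ ++ [x]).head? = (q₁ ++ x :: y :: q₂).head? := by
        rw [List.head?_append, List.head?_append]; rfl
      rw [this, ← hq]; exact hs_head
    have rtg1 : Relation.ReflTransGen (fun a b => (a, b) ∈ X ∧ b ≠ u) s x :=
      rtg_of_chain' (chain'_avoid hseg1X fun h' => huq (List.mem_of_mem_tail h'))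
        hseg1h (List.getLast?_concat)
    -- segment 2 : x → v
    have hseg2X : (x :: y :: p₂).Chain' (fun a b => (a, b) ∈ X) :=
      hPchX.suffix ⟨p₁, hpP.symm⟩
    have hseg2l : (x :: y :: p₂).getLast? = some v := by
      rw [hpP, List.getLast?_append_cons] at hPl; exact hPl
    have hPd : P = u :: P.tail := (List.cons_head?_tail hPh).symm
    have hut : u ∉ P.tail := by
      have h' := hPnd
      rw [hPd, List.nodup_cons] at h'
      exact h'.1
    have hyP : y ∈ P.tail := (List.of_mem_zip hzP).2
    have hup₂ : u ∉ y :: p₂ := by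
      intro hu'
      have hsuf : (y :: p₂) <:+ P := ⟨p₁ ++ [x], by simp [hpP]⟩
      rw [hPd] at hsuf
      rcases List.suffix_cons_iff.mp hsuf with h' | h'
      · injection h' with e1 _
        exact hut (e1 ▸ hyP)
      · exact hut (h'.subset hu')
    have rtg2 : Relation.ReflTransGen (fun a b => (a, b) ∈ X ∧ b ≠ u) x v :=
      rtg_of_chain' (chain'_avoid hseg2X hup₂) rfl hseg2l
    -- segment 3 : v → t
    have hseg3X : (v :: l₃).Chain' (fun a b => (a, b) ∈ X) :=
      hLX.suffix ⟨l₁ ++ u :: l₂, hL2.symm⟩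
    have rtg3 : Relation.ReflTransGen (fun a b => (a, b) ∈ X ∧ b ≠ u) v t :=
      rtg_of_chain' (chain'_avoid hseg3X hu₃) rfl ht_last
    obtain ⟨L', hL'path, hL'nu⟩ := exists_avoid X ((rtg1.trans rtg2).trans rtg3) hs_ne_u
    obtain ⟨a₁, a₂, a₃, hLd'⟩ := hvisit L' hL'path
    exact hL'nu (hLd' ▸ by simp)
  · -- suffix component
    refine rtg_of_chain' (L := v :: l₃) (chain'_iff_zip.mpr ?_) rfl ht_last
    rintro ⟨x, y⟩ hp
    have hxy := chain'_iff_zip.mp hSufXF _ hp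
    rw [Finset.mem_sdiff] at hxy
    rw [Finset.mem_sdiff, Finset.mem_sdiff]
    refine ⟨⟨hxy.1, ?_⟩, hxy.2⟩
    intro hyY
    obtain ⟨P, ⟨hPh, hPl, hPnd, hPchX⟩, hzP⟩ := (hY _).mp hyY
    obtain ⟨q₁, q₂, hq⟩ := zip_decomp hp
    obtain ⟨p₁, p₂, hpP⟩ := zip_decomp hzP
    have hy₃ : y ∈ l₃ := (List.of_mem_zip hp).2
    have hy_ne_v : y ≠ v := fun h' => hv₃ (h' ▸ hy₃)
    have hv_mem : v ∈ y :: p₂ := by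
      rw [hpP, List.getLast?_append_cons, List.getLast?_cons_cons] at hPl
      exact mem_of_getLast?' hPl
    have hP1 : (p₁ ++ [x]) ++ (y :: p₂) = P := by simp [hpP]
    have hvp₁ : v ∉ p₁ ++ [x] := by
      intro h'
      rw [← hP1, List.nodup_append'] at hPnd
      exact hPnd.2.2 h' hv_mem
    have hs_ne_v : s ≠ v := by
      intro h'
      rcases l₁ with _ | ⟨a, l₁'⟩
      · rw [List.nil_append, List.head?_cons, Option.some.injEq] at hs_head
        exact huv (hs_head ▸ h')
      · rw [List.cons_append, List.head?_cons, Option.some.injEq] at hs_head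
        exact hv₁ (h' ▸ hs_head ▸ List.mem_cons_self)
    -- segment 1 : s → u
    have hvPre : v ∉ l₁ ++ [u] := by
      simp only [List.mem_append, List.mem_singleton]
      rintro (h' | h')
      · exact hv₁ h'
      · exact huv h'.symm
    have rtg1 : Relation.ReflTransGen (fun a b => (a, b) ∈ X ∧ b ≠ v) s u :=
      rtg_of_chain' (chain'_avoid hPreX fun h' => hvPre (List.mem_of_mem_tail h'))
        hs_head (List.getLast?_concat)
    -- segment 2 : u → x
    have hseg2X : (p₁ ++ [x]).Chain' (fun a b => (a, b) ∈ X) :=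
      hPchX.prefix ⟨y :: p₂, hP1⟩
    have hseg2h : (p₁ ++ [x]).head? = some u := by
      have : (p₁ ++ [x]).head? = (p₁ ++ x :: y :: p₂).head? := by
        rw [List.head?_append, List.head?_append]; rfl
      rw [this, ← hpP]; exact hPh
    have rtg2 : Relation.ReflTransGen (fun a b => (a, b) ∈ X ∧ b ≠ v) u x :=
      rtg_of_chain' (chain'_avoid hseg2X fun h' => hvp₁ (List.mem_of_mem_tail h'))
        hseg2h (List.getLast?_concat)
    -- segment 3 : x → t
    have hseg3X : (x :: y :: q₂).Chain' (fun a b => (a, b) ∈ X) := by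
      have hsuf : (x :: y :: q₂) <:+ L := List.IsSuffix.trans
        (⟨q₁, hq.symm⟩ : (x :: y :: q₂) <:+ v :: l₃) ⟨l₁ ++ u :: l₂, hL2.symm⟩
      exact hLX.suffix hsuf
    have hseg3l : (x :: y :: q₂).getLast? = some t := by
      have h' := ht_last
      rw [hq, List.getLast?_append_cons] at h'
      exact h'
    have hvq : v ∉ y :: q₂ := by
      intro hv'
      have hsuf : (y :: q₂) <:+ v :: l₃ := ⟨q₁ ++ [x], by simp [hq]⟩
      rcases List.suffix_cons_iff.mp hsuf with h' | h'
      · injection h' with e1 _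
        exact hy_ne_v e1
      · exact hv₃ (h'.subset hv')
    have rtg3 : Relation.ReflTransGen (fun a b => (a, b) ∈ X ∧ b ≠ v) x t :=
      rtg_of_chain' (chain'_avoid hseg3X hvq) rfl hseg3l
    obtain ⟨L', hL'path, hL'nv⟩ := exists_avoid X ((rtg1.trans rtg2).trans rtg3) hs_ne_v
    obtain ⟨a₁, a₂, a₃, hLd'⟩ := hvisit L' hL'path
    exact hL'nv (hLd' ▸ by simp)

end avoid

/-- Decomposition of an optimal FTP solution: if `X` is an optimal feasible FTP
solution for `(D, s, t, M, k)`, `u, v` are such that every directed `s`-`t` path of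
`(V, X)` visits `u` and later `v`, and `Y` is the set of arcs of `X` lying on some
directed `u`-`v` path of `(V, X)`, then `Y` is a feasible FTP solution for
`(D, u, v, M, k)` of minimum cost. -/
theorem stmt9 {V : Type*} [Fintype V] [DecidableEq V] (A X M Y : Finset (V × V))
    (s t u v : V) (k : ℕ) (w : V × V → ℝ)
    (hw : ∀ e ∈ A, 0 ≤ w e)
    (hXA : X ⊆ A) (hMA : M ⊆ A)
    (hfeas : ftpFeasible X M s t k)
    (hopt : ∀ Z ⊆ A, ftpFeasible Z M s t k → ∑ e ∈ X, w e ≤ ∑ e ∈ Z, w e)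
    (hvisit : ∀ L : List V, IsPathIn X s t L →
      ∃ l₁ l₂ l₃ : List V, L = l₁ ++ u :: (l₂ ++ v :: l₃))
    (hY : ∀ e : V × V, e ∈ Y ↔ ∃ L : List V, IsPathIn X u v L ∧ e ∈ L.zip L.tail) :
    ftpFeasible Y M u v k ∧
      ∀ Z ⊆ A, ftpFeasible Z M u v k → ∑ e ∈ Y, w e ≤ ∑ e ∈ Z, w e := by
  have hYX : Y ⊆ X := by
    intro e he
    obtain ⟨L, ⟨_, _, _, hch⟩, hz⟩ := (hY e).mp he
    obtain ⟨x, y⟩ := e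
    exact chain'_iff_zip.mp hch (x, y) hz
  constructor
  · intro F hFM hFk
    exact (key_decomp X Y F s t u v hvisit hY (hfeas F hFM hFk)).1
  · intro Z hZA hZfeas
    have hX'A : (X \ Y) ∪ Z ⊆ A :=
      Finset.union_subset (Finset.sdiff_subset.trans hXA) hZA
    have hfeas' : ftpFeasible ((X \ Y) ∪ Z) M s t k := by
      intro F hFM hFk
      obtain ⟨-, h2, h3⟩ := key_decomp X Y F s t u v hvisit hY (hfeas F hFM hFk)
      have hmono : ∀ a b : V, (a, b) ∈ (X \ Y) \ F → (a, b) ∈ ((X \ Y) ∪ Z) \ F := by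
        intro a b hab
        rw [Finset.mem_sdiff] at hab ⊢
        exact ⟨Finset.mem_union_left _ hab.1, hab.2⟩
      have hmid : Relation.ReflTransGen (fun x y => (x, y) ∈ ((X \ Y) ∪ Z) \ F) u v := by
        refine Relation.ReflTransGen.mono (fun a b hab => ?_) _ _ (hZfeas F hFM hFk)
        rw [Finset.mem_sdiff] at hab ⊢
        exact ⟨Finset.mem_union_right _ hab.1, hab.2⟩
      exact ((Relation.ReflTransGen.mono hmono _ _ h2).trans hmid).trans (Relation.ReflTransGen.mono hmono _ _ h3)
    have h1 := hopt _ hX'A hfeas'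
    have h2 : ∑ e ∈ (X \ Y) ∪ Z, w e ≤ ∑ e ∈ X \ Y, w e + ∑ e ∈ Z, w e := by
      calc ∑ e ∈ (X \ Y) ∪ Z, w e
          = ∑ e ∈ X \ Y, w e + ∑ e ∈ Z \ (X \ Y), w e := by
            rw [← Finset.sum_union Finset.disjoint_sdiff, Finset.union_sdiff_self_eq_union]
        _ ≤ ∑ e ∈ X \ Y, w e + ∑ e ∈ Z, w e :=
            add_le_add_right (Finset.sum_le_sum_of_subset_of_nonneg Finset.sdiff_subset
              fun i hi _ => hw i (hZA hi)) _
    have h3 : ∑ e ∈ X \ Y, w e + ∑ e ∈ Y, w e = ∑ e ∈ X, w e := Finset.sum_sdiff hYX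
    linarith
end

section
/- Let D = (V,A) be a directed graph, s,t ∈ V, M ⊆ A, ℓ ≥ 1, and let Y ⊆ A. If for every V' ⊆ V with s ∈ V' and t ∉ V' the cut Z = δ⁺(V') ∩ Y contains at least ℓ safe arcs or at least ℓ+1 arcs (equivalently, if (V,Y) admits an s-t flow of value ℓ+1 under capacities g_e = 1 for e ∈ M and g_e = 1 + 1/ℓ for e ∉ M), then Y is a feasible FTF solution: for every f ∈ M the graph (V, Y∖{f}) contains ℓ pairwise arc-disjoint directed s-t paths. -/
/-- `S` contains `ℓ` pairwise arc-disjoint directed `s`-`t` paths. -/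
def HasDisjointPaths {V : Type*} [DecidableEq V] (S : Finset (V × V)) (s t : V)
    (ℓ : ℕ) : Prop :=
  ∃ P : Fin ℓ → Finset (V × V), (∀ i, P i ⊆ S) ∧
    (∀ i j, i ≠ j → Disjoint (P i) (P j)) ∧ ∀ i, IsPathArcs s t (P i)

/-- Feasibility for Fault-Tolerant Flow: for every vulnerable arc `f ∈ M`, the
digraph `(V, S \ {f})` contains `ℓ` pairwise arc-disjoint directed `s`-`t` paths. -/
def ftfFeasible {V : Type*} [DecidableEq V] (S M : Finset (V × V)) (s t : V)
    (ℓ : ℕ) : Prop :=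
  ∀ f ∈ M, HasDisjointPaths (S.erase f) s t ℓ


namespace FTFAux

variable {V : Type*} [DecidableEq V]

def dout (F : Finset (V × V)) (v : V) : ℕ := (F.filter (fun e => e.1 = v)).card
def din  (F : Finset (V × V)) (v : V) : ℕ := (F.filter (fun e => e.2 = v)).card
def exc  (F : Finset (V × V)) (v : V) : ℤ := (dout F v : ℤ) - (din F v : ℤ)

def arcs (L : List V) : Finset (V × V) := (L.zip L.tail).toFinset

@[simp] lemma arcs_nil : arcs ([] : List V) = ∅ := rfl
@[simp] lemma arcs_single (a : V) : arcs [a] = ∅ := rfl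

lemma arcs_cons (a b : V) (l : List V) :
    arcs (a :: b :: l) = insert (a, b) (arcs (b :: l)) := by
  simp [arcs]

lemma mem_arcs {L : List V} {e : V × V} (h : e ∈ arcs L) :
    e.1 ∈ L.dropLast ∧ e.2 ∈ L.tail := by
  induction L with
  | nil => simp [arcs] at h
  | cons a M ih =>
    cases M with
    | nil => simp [arcs] at h
    | cons b l =>
      rw [arcs_cons] at h
      rcases Finset.mem_insert.mp h with h | h
      · rw [h]; simp
      · obtain ⟨h1, h2⟩ := ih h
        refine ⟨?_, ?_⟩
        · simpa using Or.inr h1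
        · simpa using List.mem_of_mem_tail h2

lemma arcs_concat (L : List V) (h : L ≠ []) (w : V) :
    arcs (L ++ [w]) = insert (L.getLast h, w) (arcs L) := by
  induction L with
  | nil => simp at h
  | cons a M ih =>
    cases M with
    | nil => simp [arcs]
    | cons b l =>
      have hbl : (b :: l : List V) ≠ [] := by simp
      have : (a :: b :: l) ++ [w] = a :: b :: (l ++ [w]) := by simp
      rw [this]
      have h2 : (b :: l) ++ [w] = b :: (l ++ [w]) := by simp
      rw [arcs_cons, ← h2, ih hbl, arcs_cons, Finset.insert_comm]
      congr 2

lemma arcs_suffix (L M : List V) : arcs M ⊆ arcs (L ++ M) := by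
  induction L with
  | nil => simp
  | cons a rest ih =>
    refine ih.trans ?_
    cases h : rest ++ M with
    | nil => simp [h]
    | cons b l =>
      have : (a :: rest) ++ M = a :: b :: l := by simp [← h]
      rw [this, arcs_cons]
      exact Finset.subset_insert _ _



@[simp] lemma dout_empty (v : V) : dout (∅ : Finset (V × V)) v = 0 := by simp [dout]
@[simp] lemma din_empty (v : V) : din (∅ : Finset (V × V)) v = 0 := by simp [din]
@[simp] lemma exc_empty (v : V) : exc (∅ : Finset (V × V)) v = 0 := by simp [exc]

lemma dout_pos {F : Finset (V × V)} {v : V} (h : 1 ≤ dout F v) : ∃ w, (v, w) ∈ F := by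
  obtain ⟨e, he⟩ := Finset.card_pos.mp h
  simp only [Finset.mem_filter] at he
  exact ⟨e.2, by rw [← he.2]; exact he.1⟩

lemma din_pos_of_mem {F : Finset (V × V)} {u v : V} (h : (u, v) ∈ F) : 1 ≤ din F v :=
  Finset.card_pos.mpr ⟨(u, v), Finset.mem_filter.mpr ⟨h, rfl⟩⟩

lemma dout_insert {F : Finset (V × V)} {e : V × V} (he : e ∉ F) (v : V) :
    dout (insert e F) v = (if e.1 = v then 1 else 0) + dout F v := by
  unfold dout
  rw [Finset.filter_insert]
  split
  · rw [Finset.card_insert_of_notMem (fun h => he (Finset.mem_filter.mp h).1)]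
    omega
  · simp

lemma din_insert {F : Finset (V × V)} {e : V × V} (he : e ∉ F) (v : V) :
    din (insert e F) v = (if e.2 = v then 1 else 0) + din F v := by
  unfold din
  rw [Finset.filter_insert]
  split
  · rw [Finset.card_insert_of_notMem (fun h => he (Finset.mem_filter.mp h).1)]
    omega
  · simp

lemma exc_insert {F : Finset (V × V)} {e : V × V} (he : e ∉ F) (v : V) :
    exc (insert e F) v =
      ((if e.1 = v then 1 else 0) - (if e.2 = v then 1 else 0)) + exc F v := by
  unfold exc
  rw [dout_insert he, din_insert he]
  push_cast
  split <;> split <;> ring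

lemma dout_mono {F G : Finset (V × V)} (h : F ⊆ G) (v : V) : dout F v ≤ dout G v :=
  Finset.card_le_card (Finset.filter_subset_filter _ h)

lemma din_mono {F G : Finset (V × V)} (h : F ⊆ G) (v : V) : din F v ≤ din G v :=
  Finset.card_le_card (Finset.filter_subset_filter _ h)

lemma filter_sdiff' (F X : Finset (V × V)) (p : V × V → Prop) [DecidablePred p] :
    (F \ X).filter p = F.filter p \ X.filter p := by
  ext e
  simp only [Finset.mem_filter, Finset.mem_sdiff]
  tauto

lemma exc_sdiff {F X : Finset (V × V)} (h : X ⊆ F) (v : V) :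
    exc (F \ X) v = exc F v - exc X v := by
  have h1 : dout (F \ X) v = dout F v - dout X v := by
    unfold dout
    rw [filter_sdiff', Finset.card_sdiff_of_subset (Finset.filter_subset_filter _ h)]
  have h2 : din (F \ X) v = din F v - din X v := by
    unfold din
    rw [filter_sdiff', Finset.card_sdiff_of_subset (Finset.filter_subset_filter _ h)]
  unfold exc
  rw [h1, h2]
  have := dout_mono h v
  have := din_mono h v
  push_cast [Nat.cast_sub ‹dout X v ≤ dout F v›]
  omega

lemma exc_union {F G : Finset (V × V)} (h : Disjoint F G) (v : V) :
    exc (F ∪ G) v = exc F v + exc G v := by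
  have h1 : dout (F ∪ G) v = dout F v + dout G v := by
    unfold dout
    rw [Finset.filter_union, Finset.card_union_of_disjoint
      (Finset.disjoint_filter_filter h)]
  have h2 : din (F ∪ G) v = din F v + din G v := by
    unfold din
    rw [Finset.filter_union, Finset.card_union_of_disjoint
      (Finset.disjoint_filter_filter h)]
  unfold exc
  rw [h1, h2]
  push_cast
  ring

lemma exc_image_swap (F : Finset (V × V)) (v : V) :
    exc (F.image Prod.swap) v = - exc F v := by
  have hinj : Set.InjOn Prod.swap (F : Set (V × V)) :=
    fun a _ b _ hab => Prod.swap_injective hab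
  have h1 : dout (F.image Prod.swap) v = din F v := by
    unfold dout din
    rw [← Finset.card_image_of_injective (F.filter (fun e => e.2 = v)) Prod.swap_injective]
    congr 1
    ext e
    simp only [Finset.mem_filter, Finset.mem_image]
    constructor
    · rintro ⟨⟨a, ha, rfl⟩, hv⟩
      exact ⟨a, ⟨ha, hv⟩, rfl⟩
    · rintro ⟨a, ⟨ha, hv⟩, rfl⟩
      exact ⟨⟨a, ha, rfl⟩, hv⟩
  have h2 : din (F.image Prod.swap) v = dout F v := by
    unfold dout din
    rw [← Finset.card_image_of_injective (F.filter (fun e => e.1 = v)) Prod.swap_injective]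
    congr 1
    ext e
    simp only [Finset.mem_filter, Finset.mem_image]
    constructor
    · rintro ⟨⟨a, ha, rfl⟩, hv⟩
      exact ⟨a, ⟨ha, hv⟩, rfl⟩
    · rintro ⟨a, ⟨ha, hv⟩, rfl⟩
      exact ⟨⟨a, ha, rfl⟩, hv⟩
  unfold exc
  rw [h1, h2]
  ring



lemma dout_arcs {L : List V} (h : L.Nodup) (v : V) :
    dout (arcs L) v = if v ∈ L.dropLast then 1 else 0 := by
  induction L with
  | nil => simp
  | cons a M ih =>
    cases M with
    | nil => simp
    | cons b l =>
      have hn : (b :: l : List V).Nodup := h.of_cons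
      have hab : (a, b) ∉ arcs (b :: l) := by
        intro hmem
        have := (mem_arcs hmem).1
        exact (List.nodup_cons.mp h).1 (List.dropLast_subset _ this)
      rw [arcs_cons, dout_insert hab, ih hn]
      have hdl : (a :: b :: l).dropLast = a :: (b :: l).dropLast := rfl
      rw [hdl]
      by_cases hva : a = v
      · subst hva
        have : a ∉ (b :: l).dropLast :=
          fun hm => (List.nodup_cons.mp h).1 (List.dropLast_subset _ hm)
        simp [this]
      · have hva' : ¬ v = a := fun h' => hva h'.symm
        simp only [if_neg hva, List.mem_cons, zero_add, hva', false_or]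

lemma din_arcs {L : List V} (h : L.Nodup) (v : V) :
    din (arcs L) v = if v ∈ L.tail then 1 else 0 := by
  induction L with
  | nil => simp
  | cons a M ih =>
    cases M with
    | nil => simp
    | cons b l =>
      have hn : (b :: l : List V).Nodup := h.of_cons
      have hab : (a, b) ∉ arcs (b :: l) := by
        intro hmem
        have := (mem_arcs hmem).1
        exact (List.nodup_cons.mp h).1 (List.dropLast_subset _ this)
      rw [arcs_cons, din_insert hab, ih hn]
      have htl : (a :: b :: l).tail = b :: l := rfl
      rw [htl]
      by_cases hvb : b = v
      · subst hvb
        have hbl : b ∉ l := (List.nodup_cons.mp hn).1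
        simp [hbl]
      · have htl2 : (b :: l).tail = l := rfl
        rw [htl2]
        have hveq : ¬ v = b := fun h' => hvb h'.symm
        simp only [if_neg hvb, List.mem_cons, hveq, false_or, zero_add]

lemma exc_arcs {L : List V} (h : L.Nodup) (hne : L ≠ []) (v : V) :
    exc (arcs L) v = (if L.head? = some v then 1 else 0)
      - (if L.getLast? = some v then 1 else 0) := by
  unfold exc
  rw [dout_arcs h, din_arcs h]
  have hhead : L.head? = some (L.head hne) := List.head?_eq_head hne
  have hlast : L.getLast? = some (L.getLast hne) := List.getLast?_eq_getLast hne
  rw [hhead, hlast]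
  have hdl : ∀ x, x ∈ L.dropLast ↔ x ∈ L ∧ x ≠ L.getLast hne := by
    intro x
    constructor
    · intro hx
      refine ⟨List.dropLast_subset _ hx, fun heq => ?_⟩
      subst heq
      have hsplit : L.dropLast ++ [L.getLast hne] = L := List.dropLast_append_getLast hne
      have : L.Nodup := h
      rw [← hsplit] at this
      exact (List.disjoint_of_nodup_append this) hx (by simp)
    · rintro ⟨hx, hne'⟩
      have hsplit : L.dropLast ++ [L.getLast hne] = L := List.dropLast_append_getLast hne
      rw [← hsplit] at hx
      rcases List.mem_append.mp hx with h' | h'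
      · exact h'
      · simp at h'; exact absurd h' hne'
  have htl : ∀ x, x ∈ L.tail ↔ x ∈ L ∧ x ≠ L.head hne := by
    intro x
    cases L with
    | nil => simp at hne
    | cons a M =>
      simp only [List.tail_cons, List.head_cons, List.mem_cons]
      constructor
      · intro hx
        exact ⟨Or.inr hx, fun heq => (List.nodup_cons.mp h).1 (heq ▸ hx)⟩
      · rintro ⟨hx | hx, hne'⟩
        · exact absurd hx hne'
        · exact hx
  simp only [hdl v, htl v]
  have hlmem : L.getLast hne ∈ L := List.getLast_mem hne
  have hhmem : L.head hne ∈ L := List.head_mem hne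
  by_cases h1 : v = L.head hne <;> by_cases h2 : v = L.getLast hne <;>
    simp [h1, h2, hlmem, hhmem, eq_comm] <;> split <;> simp_all

lemma sum_dout (F : Finset (V × V)) (X : Finset V) :
    ∑ v ∈ X, dout F v = (F.filter (fun e => e.1 ∈ X)).card := by
  rw [Finset.card_eq_sum_card_fiberwise
    (f := Prod.fst) (s := F.filter (fun e => e.1 ∈ X)) (t := X) (fun e he => (Finset.mem_filter.mp he).2)]
  refine Finset.sum_congr rfl fun v hv => ?_
  unfold dout
  congr 1
  ext e
  simp only [Finset.mem_filter]
  constructor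
  · rintro ⟨he, rfl⟩; exact ⟨⟨he, hv⟩, rfl⟩
  · rintro ⟨⟨he, _⟩, rfl⟩; exact ⟨he, rfl⟩

lemma sum_din (F : Finset (V × V)) (X : Finset V) :
    ∑ v ∈ X, din F v = (F.filter (fun e => e.2 ∈ X)).card := by
  rw [Finset.card_eq_sum_card_fiberwise
    (f := Prod.snd) (s := F.filter (fun e => e.2 ∈ X)) (t := X) (fun e he => (Finset.mem_filter.mp he).2)]
  refine Finset.sum_congr rfl fun v hv => ?_
  unfold din
  congr 1
  ext e
  simp only [Finset.mem_filter]
  constructor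
  · rintro ⟨he, rfl⟩; exact ⟨⟨he, hv⟩, rfl⟩
  · rintro ⟨⟨he, _⟩, rfl⟩; exact ⟨he, rfl⟩

lemma sum_exc (F : Finset (V × V)) (X : Finset V) :
    ∑ v ∈ X, exc F v =
      ((F.filter (fun e => e.1 ∈ X ∧ e.2 ∉ X)).card : ℤ)
        - ((F.filter (fun e => e.1 ∉ X ∧ e.2 ∈ X)).card : ℤ) := by
  have h1 : (F.filter (fun e => e.1 ∈ X)).card
      = (F.filter (fun e => e.1 ∈ X ∧ e.2 ∈ X)).card
        + (F.filter (fun e => e.1 ∈ X ∧ e.2 ∉ X)).card := by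
    rw [← Finset.card_union_of_disjoint]
    · congr 1
      ext e
      simp only [Finset.mem_union, Finset.mem_filter]
      tauto
    · rw [Finset.disjoint_left]
      intro e he1 he2
      simp only [Finset.mem_filter] at he1 he2
      tauto
  have h2 : (F.filter (fun e => e.2 ∈ X)).card
      = (F.filter (fun e => e.1 ∈ X ∧ e.2 ∈ X)).card
        + (F.filter (fun e => e.1 ∉ X ∧ e.2 ∈ X)).card := by
    rw [← Finset.card_union_of_disjoint]
    · congr 1
      ext e
      simp only [Finset.mem_union, Finset.mem_filter]
      tauto
    · rw [Finset.disjoint_left]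
      intro e he1 he2
      simp only [Finset.mem_filter] at he1 he2
      tauto
  unfold exc
  rw [Finset.sum_sub_distrib, ← Nat.cast_sum, ← Nat.cast_sum, sum_dout, sum_din]
  omega

lemma chain'_arcs {r : V → V → Prop} {L : List V} (h : List.Chain' r L) :
    ∀ e ∈ arcs L, r e.1 e.2 := by
  induction L with
  | nil => simp
  | cons a M ih =>
    cases M with
    | nil => simp
    | cons b l =>
      rw [arcs_cons]
      intro e he
      rcases Finset.mem_insert.mp he with rfl | he
      · exact (List.isChain_cons_cons.mp h).1
      · exact ih (List.isChain_cons_cons.mp h).2 e he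

lemma reach_list {r : V → V → Prop} {s b : V} (h : Relation.ReflTransGen r s b) :
    ∃ L : List V, L.head? = some s ∧ L.getLast? = some b ∧ L.Nodup ∧ List.Chain' r L := by
  induction h with
  | refl => exact ⟨[s], rfl, rfl, List.nodup_singleton s, List.isChain_singleton s⟩
  | @tail b c hab hbc ih =>
    obtain ⟨L, hh, hl, hnd, hch⟩ := ih
    have hLne : L ≠ [] := by intro h'; rw [h'] at hh; simp at hh
    by_cases hc : c ∈ L
    · obtain ⟨L₁, L₂, rfl⟩ := List.append_of_mem hc
      refine ⟨L₁ ++ [c], ?_, ?_, ?_, ?_⟩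
      · rw [← hh]; cases L₁ <;> simp
      · simp
      · have hsub : (L₁ ++ [c]).Sublist (L₁ ++ c :: L₂) :=
          (List.cons_sublist_cons.mpr (List.nil_sublist L₂)).append_left L₁
        exact hsub.nodup hnd
      · have : (L₁ ++ [c]) <+: (L₁ ++ c :: L₂) := ⟨L₂, by simp⟩
        exact hch.prefix this
    · refine ⟨L ++ [c], ?_, ?_, ?_, ?_⟩
      · rw [← hh]; cases L <;> simp_all
      · simp
      · rw [List.nodup_append]
        exact ⟨hnd, List.nodup_singleton c, by simpa using fun a ha (h : a = c) => hc (h ▸ ha)⟩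
      · rw [show List.Chain' r (L ++ [c]) = List.IsChain r (L ++ [c]) from rfl, List.isChain_append]
        refine ⟨hch, List.isChain_singleton c, ?_⟩
        intro x hx y hy
        simp only [List.head?_cons, Option.mem_def, Option.some.injEq] at hy
        rw [hl] at hx
        simp only [Option.mem_def, Option.some.injEq] at hx
        subst hx; subst hy
        exact hbc

lemma getLast_eq_of_eq {L M : List V} (h : L = M) (hne : L ≠ []) :
    L.getLast hne = M.getLast (h ▸ hne) := by subst h; rfl

lemma getLast_not_mem_dropLast {L : List V} (h : L.Nodup) (hne : L ≠ []) :
    L.getLast hne ∉ L.dropLast := by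
  intro hmem
  have hsplit : L.dropLast ++ [L.getLast hne] = L := List.dropLast_append_getLast hne
  rw [← hsplit] at h
  exact (List.disjoint_of_nodup_append h) hmem (by simp)

lemma walk_aux [Fintype V] {F : Finset (V × V)} {s t : V}
    (hbal : ∀ v, v ≠ s → v ≠ t → exc F v = 0) (hs : 1 ≤ exc F s) :
    ∀ (n : ℕ) (L : List V) (hne : L ≠ []), L.Nodup → L.head? = some s → t ∉ L →
      arcs L ⊆ F → L.length + n = Fintype.card V →
      (∃ P ⊆ F, IsPathArcs s t P) ∨ (∃ C ⊆ F, C.Nonempty ∧ ∀ v, exc C v = 0) := by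
  intro n
  induction n with
  | zero =>
    intro L hne hnd hh ht hsub hlen
    exfalso
    apply ht
    have hcard : L.toFinset.card = Fintype.card V := by
      rw [List.toFinset_card_of_nodup hnd]; omega
    have : L.toFinset = Finset.univ := Finset.eq_univ_of_card _ hcard
    have : t ∈ L.toFinset := this ▸ Finset.mem_univ t
    simpa using this
  | succ n ih =>
    intro L hne hnd hh ht hsub hlen
    set v := L.getLast hne with hv
    have hvL : v ∈ L := List.getLast_mem hne
    have hvt : v ≠ t := fun h => ht (h ▸ hvL)
    -- find an outgoing arc (v, w) ∈ F
    have hout : ∃ w, (v, w) ∈ F := by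
      by_cases hvs : v = s
      · apply dout_pos
        have : exc F s = (dout F s : ℤ) - din F s := rfl
        rw [hvs]; omega
      · -- L has length ≥ 2, so there is an arc into v
        have hdl : L.dropLast ≠ [] := by
          intro hd
          cases L with
          | nil => exact hne rfl
          | cons a M =>
            cases M with
            | nil =>
              simp only [List.head?_cons, Option.some.injEq] at hh
              exact hvs (by simp [hv, ← hh])
            | cons b l => simp at hd
        have hinarc : (L.dropLast.getLast hdl, v) ∈ arcs L := by
          have h1 : (L.dropLast.getLast hdl, L.getLast hne)
              ∈ arcs (L.dropLast ++ [L.getLast hne]) := by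
            rw [arcs_concat _ hdl]
            exact Finset.mem_insert_self _ _
          have h2 : arcs (L.dropLast ++ [L.getLast hne]) = arcs L :=
            congrArg arcs (List.dropLast_append_getLast hne)
          exact h2 ▸ h1
        have hdin : 1 ≤ din F v := din_pos_of_mem (hsub hinarc)
        apply dout_pos
        have hb := hbal v hvs hvt
        have : exc F v = (dout F v : ℤ) - din F v := rfl
        omega
    obtain ⟨w, hw⟩ := hout
    by_cases hwt : w = t
    · subst hwt
      left
      refine ⟨arcs (L ++ [w]), ?_, L ++ [w], ?_, ?_, ?_, rfl⟩
      · rw [arcs_concat _ hne]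
        exact Finset.insert_subset hw hsub
      · rw [← hh]; cases L with | nil => exact absurd rfl hne | cons a M => simp
      · simp
      · rw [List.nodup_append]
        exact ⟨hnd, List.nodup_singleton _, by simpa using fun a ha (h : a = w) => ht (h ▸ ha)⟩
    · by_cases hwL : w ∈ L
      · right
        obtain ⟨L₁, L₂, hL⟩ := List.append_of_mem hwL
        have hwl2ne : (w :: L₂ : List V) ≠ [] := by simp
        have hwl2nd : (w :: L₂ : List V).Nodup := by
          rw [hL] at hnd
          exact (List.nodup_append.mp hnd).2.1
        have hvlast : v = (w :: L₂).getLast hwl2ne := by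
          rw [hv, getLast_eq_of_eq hL hne]
          exact (List.getLast_append_of_ne_nil _ hwl2ne)
        have harcssub : arcs (w :: L₂) ⊆ F := by
          intro e he
          exact hsub (hL ▸ arcs_suffix L₁ (w :: L₂) he)
        have hnotmem : (v, w) ∉ arcs (w :: L₂) := by
          intro hmem
          have h1 := (mem_arcs hmem).1
          rw [hvlast] at h1
          exact getLast_not_mem_dropLast hwl2nd hwl2ne h1
        refine ⟨insert (v, w) (arcs (w :: L₂)), ?_, ⟨_, Finset.mem_insert_self _ _⟩, ?_⟩
        · exact Finset.insert_subset hw harcssub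
        · intro u
          rw [exc_insert hnotmem, exc_arcs hwl2nd hwl2ne]
          have hlast? : (w :: L₂).getLast? = some v := by
            rw [List.getLast?_eq_getLast hwl2ne, hvlast]
          rw [hlast?]
          simp only [List.head?_cons]
          by_cases h1 : v = u <;> by_cases h2 : w = u <;>
            simp [h1, h2, Option.some.injEq] <;> omega
      · -- extend the walk
        apply ih (L ++ [w]) (by simp) ?_ ?_ ?_ ?_ ?_
        · rw [List.nodup_append]
          exact ⟨hnd, List.nodup_singleton _, by simpa using fun a ha (h : a = w) => hwL (h ▸ ha)⟩
        · rw [← hh]; cases L with | nil => exact absurd rfl hne | cons a M => simp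
        · simp only [List.mem_append, List.mem_singleton]
          rintro (h | h)
          · exact ht h
          · exact hwt h.symm
        · rw [arcs_concat _ hne]
          exact Finset.insert_subset hw hsub
        · simp only [List.length_append, List.length_singleton]
          omega

lemma extract [Fintype V] {s t : V} (hst : s ≠ t) :
    ∀ (m : ℕ) (F : Finset (V × V)), F.card ≤ m →
      (∀ v, v ≠ s → v ≠ t → exc F v = 0) → 1 ≤ exc F s →
      ∃ P ⊆ F, IsPathArcs s t P := by
  intro m
  induction m with
  | zero =>
    intro F hcard hbal hs
    have : F = ∅ := Finset.card_eq_zero.mp (Nat.le_zero.mp hcard)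
    rw [this] at hs
    simp at hs
  | succ m ih =>
    intro F hcard hbal hs
    have hcardV : 1 ≤ Fintype.card V := Fintype.card_pos_iff.mpr ⟨s⟩
    rcases walk_aux hbal hs (Fintype.card V - 1) [s] (by simp) (List.nodup_singleton s)
        rfl (by simpa using Ne.symm hst) (by simp) (by simp; omega) with h | ⟨C, hCF, hCne, hCexc⟩
    · exact h
    · have hcard' : (F \ C).card ≤ m := by
        have h1 : (F \ C).card = F.card - C.card := Finset.card_sdiff_of_subset hCF
        have h2 : 1 ≤ C.card := Finset.card_pos.mpr hCne
        omega
      have hbal' : ∀ v, v ≠ s → v ≠ t → exc (F \ C) v = 0 := by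
        intro u hus hut
        rw [exc_sdiff hCF, hCexc, hbal u hus hut]
        ring
      have hs' : 1 ≤ exc (F \ C) s := by
        rw [exc_sdiff hCF, hCexc]; omega
      obtain ⟨P, hPF, hP⟩ := ih (F \ C) hcard' hbal' hs'
      exact ⟨P, hPF.trans (Finset.sdiff_subset), hP⟩

lemma exc_isPathArcs {s t : V} {P : Finset (V × V)} (h : IsPathArcs s t P) (v : V) :
    exc P v = (if v = s then 1 else 0) - (if v = t then 1 else 0) := by
  obtain ⟨L, hh, hl, hnd, rfl⟩ := h
  have hne : L ≠ [] := by intro h'; rw [h'] at hh; simp at hh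
  have : (L.zip L.tail).toFinset = arcs L := rfl
  rw [this, exc_arcs hnd hne, hh, hl]
  simp only [Option.some.injEq]
  clear this hh hl hnd hne
  by_cases h1 : v = s
  · subst h1
    by_cases h2 : v = t
    · subst h2; simp
    · have h2' : ¬ t = v := fun h => h2 h.symm
      simp [h2, h2']
  · by_cases h2 : v = t
    · subst h2
      have h1' : ¬ s = v := fun h => h1 h.symm
      simp [h1, h1']
    · have h1' : ¬ s = v := fun h => h1 h.symm
      have h2' : ¬ t = v := fun h => h2 h.symm
      simp [h1, h2, h1', h2']

lemma decompose [Fintype V] {s t : V} (hst : s ≠ t) :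
    ∀ (k : ℕ) (F : Finset (V × V)), (∀ v, v ≠ s → v ≠ t → exc F v = 0) →
      exc F s = k → HasDisjointPaths F s t k := by
  intro k
  induction k with
  | zero =>
    intro F _ _
    exact ⟨fun _ => ∅, fun i => i.elim0, fun i => i.elim0, fun i => i.elim0⟩
  | succ k ih =>
    intro F hbal hexc
    obtain ⟨P₀, hP₀F, hP₀⟩ := extract hst F.card F le_rfl hbal (by rw [hexc]; push_cast; omega)
    have hbal' : ∀ v, v ≠ s → v ≠ t → exc (F \ P₀) v = 0 := by
      intro v hvs hvt
      rw [exc_sdiff hP₀F, hbal v hvs hvt, exc_isPathArcs hP₀, if_neg hvs, if_neg hvt]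
      ring
    have hexc' : exc (F \ P₀) s = k := by
      rw [exc_sdiff hP₀F, hexc, exc_isPathArcs hP₀, if_pos rfl, if_neg hst]
      push_cast
      ring
    obtain ⟨P, hPF, hdisj, hpath⟩ := ih (F \ P₀) hbal' hexc'
    refine ⟨Fin.cases P₀ P, ?_, ?_, ?_⟩
    · intro i
      induction i using Fin.cases with
      | zero => simpa using hP₀F
      | succ j => simpa using (hPF j).trans Finset.sdiff_subset
    · intro i j hij
      induction i using Fin.cases with
      | zero =>
        induction j using Fin.cases with
        | zero => exact absurd rfl hij
        | succ j' =>
          simp only [Fin.cases_zero, Fin.cases_succ]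
          exact Finset.disjoint_left.mpr fun e he he' =>
            (Finset.mem_sdiff.mp (hPF j' he')).2 he
      | succ i' =>
        induction j using Fin.cases with
        | zero =>
          simp only [Fin.cases_zero, Fin.cases_succ]
          exact Finset.disjoint_right.mpr fun e he' he =>
            (Finset.mem_sdiff.mp (hPF i' he)).2 he'
        | succ j' =>
          simp only [Fin.cases_succ]
          exact hdisj i' j' (fun h => hij (congrArg Fin.succ h))
    · intro i
      induction i using Fin.cases with
      | zero => simpa using hP₀
      | succ j => simpa using hpath j

lemma menger [Fintype V] {S : Finset (V × V)} {s t : V} (hst : s ≠ t) (k : ℕ)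
    (hcut : ∀ X : Finset V, s ∈ X → t ∉ X → k ≤ (cutArcs S X).card) :
    ∃ F ⊆ S, (∀ v, v ≠ s → v ≠ t → exc F v = 0) ∧ exc F s = k := by
  classical
  induction k with
  | zero => exact ⟨∅, Finset.empty_subset S, fun v _ _ => exc_empty v, exc_empty s⟩
  | succ k ih =>
    obtain ⟨F, hFS, hbal, hexc⟩ := ih fun X hs ht => le_trans (Nat.le_succ k) (hcut X hs ht)
    set r : V → V → Prop := fun u v => ((u, v) ∈ S ∧ (u, v) ∉ F) ∨ (v, u) ∈ F with hr
    by_cases hreach : Relation.ReflTransGen r s t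
    · obtain ⟨L, hh, hl, hnd, hch⟩ := reach_list hreach
      have hLne : L ≠ [] := by intro h'; rw [h'] at hh; simp at hh
      have harcs : ∀ e ∈ arcs L, r e.1 e.2 := chain'_arcs hch
      set fwdA := (arcs L).filter (fun e => e ∈ S ∧ e ∉ F) with hfwd
      set bwdA := (arcs L).filter (fun e => ¬(e ∈ S ∧ e ∉ F)) with hbwd
      have hbwdF : bwdA.image Prod.swap ⊆ F := by
        intro e he
        obtain ⟨a, ha, rfl⟩ := Finset.mem_image.mp he
        obtain ⟨haA, hnot⟩ := Finset.mem_filter.mp ha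
        rcases harcs a haA with h | h
        · exact absurd h hnot
        · exact h
      have hdisj : Disjoint (F \ bwdA.image Prod.swap) fwdA := by
        rw [Finset.disjoint_right]
        intro e he hmem
        exact (Finset.mem_filter.mp he).2.2 ((Finset.mem_sdiff.mp hmem).1)
      have hAsplit : ∀ v, exc (arcs L) v = exc fwdA v + exc bwdA v := by
        intro v
        rw [← exc_union (Finset.disjoint_filter_filter_not (arcs L) (arcs L) _)]
        rw [Finset.filter_union_filter_not_eq]
      have hexc' : ∀ v, exc ((F \ bwdA.image Prod.swap) ∪ fwdA) v
          = exc F v + exc (arcs L) v := by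
        intro v
        rw [exc_union hdisj, exc_sdiff hbwdF, exc_image_swap, hAsplit]
        ring
      refine ⟨(F \ bwdA.image Prod.swap) ∪ fwdA, ?_, ?_, ?_⟩
      · apply Finset.union_subset
        · exact Finset.sdiff_subset.trans hFS
        · intro e he
          exact (Finset.mem_filter.mp he).2.1
      · intro v hvs hvt
        rw [hexc' v, hbal v hvs hvt, exc_arcs hnd hLne, hh, hl]
        simp only [Option.some.injEq]
        rw [if_neg (fun h => hvs h.symm), if_neg (fun h => hvt h.symm)]
        ring
      · rw [hexc' s, hexc, exc_arcs hnd hLne, hh, hl]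
        simp only [Option.some.injEq]
        rw [if_pos trivial, if_neg (fun h : t = s => hst h.symm)]
        push_cast
        ring
    · exfalso
      set X := Finset.univ.filter (fun v => Relation.ReflTransGen r s v) with hX
      have hsX : s ∈ X := Finset.mem_filter.mpr ⟨Finset.mem_univ s, Relation.ReflTransGen.refl⟩
      have htX : t ∉ X := fun h => hreach (Finset.mem_filter.mp h).2
      have hcutS : cutArcs S X ⊆ F.filter (fun e => e.1 ∈ X ∧ e.2 ∉ X) := by
        intro e he
        obtain ⟨heS, h1, h2⟩ := Finset.mem_filter.mp he
        have heF : e ∈ F := by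
          by_contra heF
          apply h2
          refine Finset.mem_filter.mpr ⟨Finset.mem_univ _, ?_⟩
          refine Relation.ReflTransGen.tail (Finset.mem_filter.mp h1).2 ?_
          exact Or.inl ⟨by rwa [Prod.mk.eta], by rwa [Prod.mk.eta]⟩
        exact Finset.mem_filter.mpr ⟨heF, h1, h2⟩
      have hnoback : F.filter (fun e => e.1 ∉ X ∧ e.2 ∈ X) = ∅ := by
        rw [Finset.filter_eq_empty_iff]
        rintro e he ⟨h1, h2⟩
        apply h1
        refine Finset.mem_filter.mpr ⟨Finset.mem_univ _, ?_⟩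
        refine Relation.ReflTransGen.tail (Finset.mem_filter.mp h2).2 ?_
        exact Or.inr (by rwa [Prod.mk.eta])
      have hsum : ∑ v ∈ X, exc F v = k := by
        rw [Finset.sum_eq_single s]
        · exact hexc
        · intro v hvX hvs
          exact hbal v hvs (fun h => htX (h ▸ hvX))
        · intro h
          exact absurd hsX h
      have hkey := sum_exc F X
      rw [hsum, hnoback] at hkey
      simp only [Finset.card_empty, Nat.cast_zero, sub_zero] at hkey
      have hcard : (F.filter (fun e => e.1 ∈ X ∧ e.2 ∉ X)).card = k := by
        exact_mod_cast hkey.symm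
      have h1 := hcut X hsX htX
      have h2 := Finset.card_le_card hcutS
      omega

end FTFAux

/-- Sufficiency of the cut condition for FTF: if every `s`-`t` cut of `(V, Y)`
contains at least `ℓ` safe arcs or at least `ℓ + 1` arcs, then `Y` is a feasible FTF
solution: for every `f ∈ M` the graph `(V, Y \ {f})` contains `ℓ` pairwise
arc-disjoint directed `s`-`t` paths. -/
theorem stmt13 {V : Type*} [Fintype V] [DecidableEq V] (A Y M : Finset (V × V))
    (s t : V) (ℓ : ℕ) (hℓ : 1 ≤ ℓ) (hMA : M ⊆ A) (hYA : Y ⊆ A)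
    (hcut : ∀ V' : Finset V, s ∈ V' → t ∉ V' →
      ℓ ≤ ((cutArcs Y V') \ M).card ∨ ℓ + 1 ≤ (cutArcs Y V').card) :
    ftfFeasible Y M s t ℓ := by
  intro f hf
  classical
  by_cases hst : s = t
  · subst hst
    refine ⟨fun _ => ∅, fun i => Finset.empty_subset _,
      fun i j _ => Finset.disjoint_left.mpr (fun e he => absurd he (Finset.notMem_empty e)),
      fun i => ⟨[s], rfl, rfl, List.nodup_singleton s, by simp⟩⟩
  · have hcut' : ∀ X : Finset V, s ∈ X → t ∉ X → ℓ ≤ (cutArcs (Y.erase f) X).card := by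
      intro X hs ht
      have hYf : cutArcs (Y.erase f) X = (cutArcs Y X).erase f := by
        ext e
        simp only [cutArcs, Finset.mem_erase, Finset.mem_filter]
        tauto
      rw [hYf]
      rcases hcut X hs ht with h | h
      · have hsub : (cutArcs Y X) \ M ⊆ (cutArcs Y X).erase f := by
          intro e he
          obtain ⟨h1, h2⟩ := Finset.mem_sdiff.mp he
          exact Finset.mem_erase.mpr ⟨fun heq => h2 (heq ▸ hf), h1⟩
        exact le_trans h (Finset.card_le_card hsub)
      · by_cases hfc : f ∈ cutArcs Y X
        · rw [Finset.card_erase_of_mem hfc]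
          omega
        · rw [Finset.erase_eq_of_notMem hfc]
          omega
    obtain ⟨F, hFS, hbal, hexc⟩ := FTFAux.menger hst ℓ hcut'
    obtain ⟨P, h1, h2, h3⟩ := FTFAux.decompose hst ℓ F hbal hexc
    exact ⟨P, fun i => (h1 i).trans hFS, h2, h3⟩
end
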